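/- arXiv:math/0506170 — 2 statements merged into one kernel-verified Lean document; each statement's English description precedes it below -/
import Mathlib

section
/- For every m ≥ 1, every σ ∈ Σ_m and every 0 ≤ i ≤ m+1, the grade satisfies g(d_i(σ)) = g(σ) + 1; that is, each doubling map raises the grade by exactly one. -/
namespace MarklOps

/-- The juxtaposition `σ × id₁ ∈ Σ_{m+1}` of `σ ∈ Σ_m` with the identity on one strand. -/
def extLast {m : ℕ} (σ : Equiv.Perm (Fin m)) : Equiv.Perm (Fin (m + 1)) :=
  (finSuccEquivLast.symm).permCongr σ.optionCongr

/-- The cycle `ρ_v ∈ Σ_{m+1}` (0-based) fixing `k < v`, sending `k ↦ k+1` for `v ≤ k < m`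
and `m ↦ v`. -/
def rho {m : ℕ} (v : Fin (m + 1)) : Equiv.Perm (Fin (m + 1)) :=
  Fin.revPerm * (Fin.cycleRange v.rev)⁻¹ * Fin.revPerm

/-- The doubling map `d_i(σ) ∈ Σ_{m+1}` of `σ ∈ Σ_m`, for the (1-based) paper index
`0 ≤ i ≤ m+1`: for `1 ≤ i ≤ m` it doubles the `i`-th input strand of `σ`
(it sends `i ↦ σ(i)`, `i+1 ↦ σ(i)+1`, and for `j < i` resp. `j > i+1` it sends `j` to
`σ(j)` resp. `σ(j−1)` if this value is less than `σ(i)`, and to `σ(j)+1` resp. `σ(j−1)+1`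
otherwise); moreover `d_0(σ) = id_1 × σ` and `d_{m+1}(σ) = σ × id_1`. -/
def dbl {m : ℕ} (σ : Equiv.Perm (Fin m)) (i : ℕ) : Equiv.Perm (Fin (m + 1)) :=
  if h : 1 ≤ i ∧ i ≤ m then
    rho (Fin.succ (σ ⟨i - 1, by omega⟩)) * extLast σ * (rho ⟨i, by omega⟩)⁻¹
  else if i = 0 then
    rho ⟨0, Nat.succ_pos m⟩ * extLast σ * (rho ⟨0, Nat.succ_pos m⟩)⁻¹
  else
    extLast σ

/-- The differential `δ_m : k[Σ_m] → k[Σ_{m+1}]`, `δ_m(σ) = Σ_{i=0}^{m+1} (−1)^i d_i(σ)`. -/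
noncomputable def delta (k : Type*) [Field k] (m : ℕ) :
    MonoidAlgebra k (Equiv.Perm (Fin m)) →ₗ[k] MonoidAlgebra k (Equiv.Perm (Fin (m + 1))) :=
  Finsupp.lift (MonoidAlgebra k (Equiv.Perm (Fin (m + 1)))) k (Equiv.Perm (Fin m))
    (fun σ => ∑ i ∈ Finset.range (m + 2),
      ((-1 : k) ^ i) • MonoidAlgebra.of k (Equiv.Perm (Fin (m + 1))) (dbl σ i))
    ∘ₗ (MonoidAlgebra.coeffLinearEquiv k).toLinearMap

/-- `a(σ)`: the largest `a` such that `σ` fixes the first `a` points (0-based: all `j < a`). -/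
def aOf {m : ℕ} (σ : Equiv.Perm (Fin m)) : ℕ :=
  Nat.findGreatest (fun a => ∀ j : Fin m, (j : ℕ) < a → σ j = j) m

/-- `c(σ)`: the largest `c` such that `σ` fixes the last `c` points. -/
def cOf {m : ℕ} (σ : Equiv.Perm (Fin m)) : ℕ :=
  Nat.findGreatest (fun c => ∀ j : Fin m, m - c ≤ (j : ℕ) → σ j = j) m

/-- Length `m − a(σ) − c(σ)` of the middle block of `σ`. -/
def midLen {m : ℕ} (σ : Equiv.Perm (Fin m)) : ℕ := m - aOf σ - cOf σ

lemma fix_low {m : ℕ} (σ : Equiv.Perm (Fin m)) (j : Fin m) (hj : (j : ℕ) < aOf σ) :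
    σ j = j := by
  have h := Nat.findGreatest_spec (P := fun a => ∀ j : Fin m, (j : ℕ) < a → σ j = j)
    (Nat.zero_le m) (fun j hj => absurd hj (by omega))
  exact h j hj

lemma fix_high {m : ℕ} (σ : Equiv.Perm (Fin m)) (j : Fin m) (hj : m - cOf σ ≤ (j : ℕ)) :
    σ j = j := by
  have h := Nat.findGreatest_spec (P := fun c => ∀ j : Fin m, m - c ≤ (j : ℕ) → σ j = j)
    (Nat.zero_le m) (fun j hj => absurd hj (by have := j.isLt; omega))
  exact h j hj

lemma mid_mem {m : ℕ} (σ : Equiv.Perm (Fin m)) (x : Fin m)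
    (hx : aOf σ ≤ (x : ℕ) ∧ (x : ℕ) < m - cOf σ) :
    aOf σ ≤ (σ x : ℕ) ∧ (σ x : ℕ) < m - cOf σ := by
  by_contra hcon
  have h1 : (σ x : ℕ) < aOf σ ∨ m - cOf σ ≤ (σ x : ℕ) := by omega
  have h2 : σ (σ x) = σ x := h1.elim (fix_low σ _) (fix_high σ _)
  have h3 : σ x = x := σ.injective h2
  rw [h3] at h1
  omega

/-- The middle part `ω(σ)` of `σ` as a function, `s ↦ σ(a(σ)+s) − a(σ)`. -/
def midFun {m : ℕ} (σ : Equiv.Perm (Fin m)) (s : Fin (midLen σ)) : Fin (midLen σ) :=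
  ⟨(σ ⟨aOf σ + (s : ℕ), by have := s.isLt; unfold midLen at this; omega⟩ : ℕ) - aOf σ, by
    have hs := s.isLt
    unfold midLen at hs ⊢
    have hm := mid_mem σ ⟨aOf σ + (s : ℕ), by omega⟩
      ⟨by simp, by simp; omega⟩
    omega⟩

lemma midFun_injective {m : ℕ} (σ : Equiv.Perm (Fin m)) : Function.Injective (midFun σ) := by
  intro s t h
  have hs := s.isLt
  have ht := t.isLt
  unfold midLen at hs ht
  have hv : ((σ ⟨aOf σ + (s : ℕ), by omega⟩ : Fin m) : ℕ) - aOf σ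
      = ((σ ⟨aOf σ + (t : ℕ), by omega⟩ : Fin m) : ℕ) - aOf σ := congrArg Fin.val h
  have hms := mid_mem σ ⟨aOf σ + (s : ℕ), by omega⟩ ⟨by simp, by simp; omega⟩
  have hmt := mid_mem σ ⟨aOf σ + (t : ℕ), by omega⟩ ⟨by simp, by simp; omega⟩
  have hv2 : (σ ⟨aOf σ + (s : ℕ), by omega⟩ : Fin m) = σ ⟨aOf σ + (t : ℕ), by omega⟩ :=
    Fin.ext (by omega)
  have := congrArg Fin.val (σ.injective hv2)
  simp at this
  exact Fin.ext (by omega)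

/-- The middle part `ω(σ) ∈ Σ_{m−a(σ)−c(σ)}` of `σ`, with `ω(σ)(s) = σ(a(σ)+s) − a(σ)`. -/
noncomputable def midPerm {m : ℕ} (σ : Equiv.Perm (Fin m)) : Equiv.Perm (Fin (midLen σ)) :=
  Equiv.ofBijective (midFun σ) (Finite.injective_iff_bijective.mp (midFun_injective σ))

/-- `b(σ)`: the number of doubled strings in `ω(σ)`, i.e. of indices `s` with
`ω(σ)(s+1) = ω(σ)(s)+1`. -/
noncomputable def bOf {m : ℕ} (σ : Equiv.Perm (Fin m)) : ℕ :=
  (Finset.univ.filter fun s : Fin (midLen σ) =>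
    ∃ h : (s : ℕ) + 1 < midLen σ,
      (midPerm σ ⟨(s : ℕ) + 1, h⟩ : ℕ) = (midPerm σ s : ℕ) + 1).card

/-- The grade `g(σ)` of a permutation `σ ∈ Σ_m`: `g(id_m) = m−1` and
`g(σ) = a(σ) + b(σ) + c(σ)` otherwise.  A permutation is primitive iff its grade is `0`. -/
noncomputable def grade {m : ℕ} (σ : Equiv.Perm (Fin m)) : ℕ :=
  if σ = 1 then m - 1 else aOf σ + bOf σ + cOf σ

lemma rho_apply {m : ℕ} (v k : Fin (m + 1)) :
    rho v k = if (k : ℕ) < (v : ℕ) then k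
      else if h : (k : ℕ) < m then ⟨(k : ℕ) + 1, by omega⟩ else v := by
  have hv := v.isLt
  have hk := k.isLt
  have key : ∀ t : Fin (m+1), Fin.cycleRange v.rev t.rev = k.rev → rho v k = t := by
    intro t ht
    show Fin.revPerm ((Fin.cycleRange v.rev)⁻¹ (Fin.revPerm k)) = t
    rw [Equiv.Perm.inv_def]
    simp only [Fin.revPerm_apply]
    rw [← ht]
    simp
  by_cases h1 : (k : ℕ) < (v : ℕ)
  · rw [if_pos h1]
    apply key
    apply Fin.cycleRange_of_gt
    rw [Fin.lt_def]
    simp only [Fin.val_rev]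
    omega
  · rw [if_neg h1]
    by_cases h2 : (k : ℕ) < m
    · rw [dif_pos h2]
      apply key
      have hlt : (⟨(k:ℕ)+1, by omega⟩ : Fin (m+1)).rev < v.rev := by
        rw [Fin.lt_def]; simp only [Fin.val_rev]; omega
      rw [Fin.cycleRange_of_lt hlt]
      apply Fin.ext
      rw [Fin.val_add_one_of_lt]
      · simp only [Fin.val_rev]; omega
      · rw [Fin.lt_def]; simp only [Fin.val_rev, Fin.val_last]; omega
    · rw [dif_neg h2]
      apply key
      have hk' : k = Fin.last m := by apply Fin.ext; simp; omega
      rw [hk']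
      simp [Fin.rev_last]

lemma rho_inv_apply {m : ℕ} (v j : Fin (m + 1)) :
    (rho v)⁻¹ j = if (j : ℕ) < (v : ℕ) then j
      else if (j : ℕ) = (v : ℕ) then Fin.last m else ⟨(j : ℕ) - 1, by omega⟩ := by
  have hv := v.isLt
  have hj := j.isLt
  have key : ∀ t : Fin (m+1), rho v t = j → (rho v)⁻¹ j = t := by
    intro t ht; rw [← ht]; simp
  by_cases h1 : (j : ℕ) < (v : ℕ)
  · rw [if_pos h1]; apply key; rw [rho_apply]; rw [if_pos h1]
  · rw [if_neg h1]
    by_cases h2 : (j : ℕ) = (v : ℕ)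
    · rw [if_pos h2]; apply key; rw [rho_apply]
      rw [if_neg (by simp; omega), dif_neg (by simp)]
      exact Fin.ext h2.symm
    · rw [if_neg h2]; apply key; rw [rho_apply]
      rw [if_neg (by simp; omega), dif_pos (by simp; omega)]
      exact Fin.ext (by simp; omega)

def nf {m : ℕ} (σ : Equiv.Perm (Fin m)) : ℕ → ℕ :=
  fun j => if h : j < m then (σ ⟨j, h⟩ : ℕ) else j

lemma nf_lt {m : ℕ} (σ : Equiv.Perm (Fin m)) {j : ℕ} (h : j < m) :
    nf σ j < m := by
  unfold nf; rw [dif_pos h]; exact (σ ⟨j, h⟩).isLt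

lemma extLast_apply {m : ℕ} (σ : Equiv.Perm (Fin m)) (j : Fin (m + 1)) :
    ((extLast σ j : Fin (m+1)) : ℕ) = nf σ (j : ℕ) := by
  induction j using Fin.lastCases with
  | last =>
    show ((extLast σ (Fin.last m) : Fin (m+1)) : ℕ) = _
    unfold extLast nf
    simp
  | cast i =>
    unfold extLast nf
    simp [Equiv.permCongr_apply]

def liftS (S x : ℕ) : ℕ := if x < S then x else x + 1

def sOf {m : ℕ} (σ : Equiv.Perm (Fin m)) (i : ℕ) : ℕ :=
  if 1 ≤ i then nf σ (i - 1) + 1 else 0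

lemma nf_lt_iff {m : ℕ} (σ : Equiv.Perm (Fin m)) (j : ℕ) : nf σ j < m ↔ j < m := by
  unfold nf; split_ifs with h
  · simp [h, (σ ⟨j, h⟩).isLt]
  · omega

lemma nf_inj {m : ℕ} (σ : Equiv.Perm (Fin m)) {x y : ℕ} (h : nf σ x = nf σ y) : x = y := by
  by_cases hx : x < m <;> by_cases hy : y < m
  · have : σ ⟨x, hx⟩ = σ ⟨y, hy⟩ := by
      apply Fin.ext; unfold nf at h; rw [dif_pos hx, dif_pos hy] at h; exact h
    have := σ.injective this
    exact congrArg Fin.val this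
  · exfalso; have h1 := nf_lt_iff σ y; have h2 := nf_lt_iff σ x; omega
  · exfalso; have h1 := nf_lt_iff σ y; have h2 := nf_lt_iff σ x; omega
  · unfold nf at h; rw [dif_neg hx, dif_neg hy] at h; exact h

lemma nf_ge {m : ℕ} (σ : Equiv.Perm (Fin m)) {j : ℕ} (h : m ≤ j) : nf σ j = j := by
  unfold nf; rw [dif_neg (by omega)]

lemma rho_val {m : ℕ} (v k : Fin (m + 1)) :
    ((rho v k : Fin (m+1)) : ℕ) = if (k : ℕ) < (v : ℕ) then (k : ℕ)
      else if (k : ℕ) < m then (k : ℕ) + 1 else (v : ℕ) := by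
  rw [rho_apply]; split_ifs <;> simp

lemma dbl_nf {m : ℕ} (σ : Equiv.Perm (Fin m)) {i j : ℕ} (hi : i ≤ m + 1) (hj : j ≤ m) :
    nf (dbl σ i) j = if j < i then liftS (sOf σ i) (nf σ j)
      else if j = i then sOf σ i else liftS (sOf σ i) (nf σ (j - 1)) := by
  have hjm : j < m + 1 := by omega
  have hnf : nf (dbl σ i) j = ((dbl σ i ⟨j, hjm⟩ : Fin (m+1)) : ℕ) := by
    unfold nf; rw [dif_pos hjm]
  rw [hnf]
  unfold dbl
  by_cases hmid : 1 ≤ i ∧ i ≤ m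
  · rw [dif_pos hmid]
    have hS : sOf σ i = (σ ⟨i - 1, by omega⟩ : ℕ) + 1 := by
      unfold sOf nf; rw [if_pos hmid.1, dif_pos (by omega)]
    have hSm : sOf σ i ≤ m := by rw [hS]; have := (σ ⟨i-1, by omega⟩).isLt; omega
    simp only [Equiv.Perm.mul_apply]
    rw [rho_inv_apply]
    simp only
    by_cases h1 : j < i
    · rw [if_pos (show ((⟨j, hjm⟩ : Fin (m+1)) : ℕ) < ((⟨i, by omega⟩ : Fin (m+1)) : ℕ) from h1)]
      rw [if_pos h1]
      have hxm : nf σ j < m := (nf_lt_iff σ j).2 (by omega)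
      rw [rho_val, extLast_apply]
      simp only [Fin.val_mk, Fin.val_succ]
      rw [← hS]
      unfold liftS
      split_ifs <;> omega
    · rw [if_neg (show ¬((⟨j, hjm⟩ : Fin (m+1)) : ℕ) < ((⟨i, by omega⟩ : Fin (m+1)) : ℕ) from h1)]
      by_cases h2 : j = i
      · rw [if_pos (show ((⟨j, hjm⟩ : Fin (m+1)) : ℕ) = ((⟨i, by omega⟩ : Fin (m+1)) : ℕ) from h2)]
        rw [if_neg h1, if_pos h2]
        rw [rho_val, extLast_apply, nf_ge σ (by simp)]
        simp only [Fin.val_last, Fin.val_succ]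
        rw [if_neg (by omega), if_neg (by omega), hS]
      · rw [if_neg (show ¬((⟨j, hjm⟩ : Fin (m+1)) : ℕ) = ((⟨i, by omega⟩ : Fin (m+1)) : ℕ) from h2)]
        rw [if_neg h1, if_neg h2]
        have hxm : nf σ (j-1) < m := (nf_lt_iff σ (j-1)).2 (by omega)
        rw [rho_val, extLast_apply]
        simp only [Fin.val_mk, Fin.val_succ]
        rw [← hS]
        unfold liftS
        split_ifs <;> omega
  · rw [dif_neg hmid]
    by_cases h0 : i = 0
    · subst h0
      rw [if_pos rfl]
      have hS : sOf σ 0 = 0 := by unfold sOf; rw [if_neg (by omega)]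
      simp only [Equiv.Perm.mul_apply]
      rw [rho_inv_apply]
      simp only
      rw [if_neg (show ¬((⟨j, hjm⟩ : Fin (m+1)) : ℕ) < ((⟨0, Nat.succ_pos m⟩ : Fin (m+1)) : ℕ) by simp)]
      by_cases h2 : j = 0
      · rw [if_pos (show ((⟨j, hjm⟩ : Fin (m+1)) : ℕ) = ((⟨0, Nat.succ_pos m⟩ : Fin (m+1)) : ℕ) from h2)]
        rw [if_neg (by omega), if_pos h2, hS]
        rw [rho_val, extLast_apply, nf_ge σ (by simp)]
        simp
      · rw [if_neg (show ¬((⟨j, hjm⟩ : Fin (m+1)) : ℕ) = ((⟨0, Nat.succ_pos m⟩ : Fin (m+1)) : ℕ) from h2)]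
        rw [if_neg (by omega), if_neg h2, hS]
        have hxm : nf σ (j-1) < m := (nf_lt_iff σ (j-1)).2 (by omega)
        rw [rho_val, extLast_apply]
        simp only [Fin.val_mk]
        unfold liftS
        split_ifs <;> omega
    · have him : i = m + 1 := by omega
      rw [if_neg h0]
      rw [extLast_apply]
      have hS : sOf σ i = m + 1 := by
        unfold sOf; rw [if_pos (by omega), him]
        simp only [Nat.add_sub_cancel]
        rw [nf_ge σ le_rfl]
      have hnfj : nf σ j < m + 1 := by
        rcases Nat.lt_or_ge j m with h | h
        · have := nf_lt_iff σ j; omega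
        · have hje : j = m := by omega
          rw [Nat.le_antisymm hj h, nf_ge σ le_rfl]; omega
      rw [if_pos (by omega : j < i), hS]
      unfold liftS
      rw [if_pos hnfj]

def ascIf {m : ℕ} (σ : Equiv.Perm (Fin m)) (j : ℕ) : ℕ :=
  if j = 0 then (if nf σ 0 = 0 then 1 else 0) else (if nf σ j = nf σ (j-1) + 1 then 1 else 0)

def Nasc {m : ℕ} (σ : Equiv.Perm (Fin m)) : ℕ := ∑ j ∈ Finset.range (m+1), ascIf σ j

lemma liftLem (S u v : ℕ) (h : v + 1 ≠ S) :
    liftS S u = liftS S v + 1 ↔ u = v + 1 := by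
  unfold liftS; split_ifs <;> omega

lemma Nasc_dbl {m : ℕ} (σ : Equiv.Perm (Fin m)) {i : ℕ} (hm : 1 ≤ m) (hi : i ≤ m + 1) :
    Nasc (dbl σ i) = Nasc σ + 1 := by
  set τ := dbl σ i with hτ
  set S := sOf σ i with hSdef
  have hS1 : 1 ≤ i → S = nf σ (i-1) + 1 := fun h => by unfold sOf at hSdef; rw [hSdef, if_pos h]
  have hS0 : i = 0 → S = 0 := fun h => by unfold sOf at hSdef; rw [hSdef, if_neg (by omega)]
  have hSle : i ≤ m → S ≤ m := by
    intro h
    by_cases h1 : 1 ≤ i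
    · rw [hS1 h1]; have := (nf_lt_iff σ (i-1)).2 (by omega); omega
    · rw [hS0 (by omega)]; omega
  have hhigh : i ≤ m → ∀ j, i < j → j ≤ m + 1 → nf τ j = liftS S (nf σ (j-1)) := by
    intro him j h1 h2
    by_cases hj : j ≤ m
    · rw [hτ, dbl_nf σ hi hj, if_neg (by omega), if_neg (by omega)]
    · have hj1 : j = m + 1 := by omega
      rw [hj1, nf_ge τ le_rfl, Nat.add_sub_cancel, nf_ge σ le_rfl]
      unfold liftS
      rw [if_neg (by have := hSle him; omega)]
  have hA : ∀ j < i, ascIf τ j = ascIf σ j := by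
    intro j hj
    have hi1 : 1 ≤ i := by omega
    have hSv := hS1 hi1
    have hjm : j ≤ m := by omega
    have hnfj : nf τ j = liftS S (nf σ j) := by rw [hτ, dbl_nf σ hi hjm, if_pos hj]
    by_cases hj0 : j = 0
    · subst hj0
      have hL : ascIf τ 0 = if nf τ 0 = 0 then 1 else 0 := by unfold ascIf; rw [if_pos rfl]
      have hR : ascIf σ 0 = if nf σ 0 = 0 then 1 else 0 := by unfold ascIf; rw [if_pos rfl]
      rw [hL, hR, hnfj]
      refine if_congr ?_ rfl rfl
      unfold liftS
      split_ifs with hss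
      · omega
      · rw [false_iff]; omega
    · have hL : ascIf τ j = if nf τ j = nf τ (j-1) + 1 then 1 else 0 := by
        unfold ascIf; rw [if_neg hj0]
      have hR : ascIf σ j = if nf σ j = nf σ (j-1) + 1 then 1 else 0 := by
        unfold ascIf; rw [if_neg hj0]
      rw [hL, hR, hnfj]
      have hnfj1 : nf τ (j-1) = liftS S (nf σ (j-1)) := by
        rw [hτ, dbl_nf σ hi (by omega), if_pos (by omega)]
      rw [hnfj1]
      refine if_congr (liftLem S _ _ ?_) rfl rfl
      intro hcon
      have : j - 1 = i - 1 := nf_inj σ (by omega)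
      omega
  have hB : ascIf τ i = 1 := by
    by_cases hi0 : i = 0
    · subst hi0
      have h0 : nf τ 0 = S := by rw [hτ, dbl_nf σ hi (by omega), if_neg (by omega), if_pos rfl]
      unfold ascIf
      rw [if_pos rfl, h0, hS0 rfl, if_pos rfl]
    · have hi1 : 1 ≤ i := by omega
      have hSv := hS1 hi1
      have hlow : nf τ (i-1) = nf σ (i-1) := by
        rw [hτ, dbl_nf σ hi (by omega), if_pos (by omega)]
        unfold liftS
        rw [if_pos (by omega)]
      have htop : nf τ i = S := by
        by_cases him : i ≤ m
        · rw [hτ, dbl_nf σ hi (by omega), if_neg (by omega), if_pos rfl]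
        · have : i = m + 1 := by omega
          subst this
          rw [nf_ge τ le_rfl, hSv, Nat.add_sub_cancel, nf_ge σ le_rfl]
      unfold ascIf
      rw [if_neg hi0, htop, hlow, if_pos (by omega)]
  have hC : ∀ j, i < j → j ≤ m + 1 → ascIf τ j = ascIf σ (j-1) := by
    intro j h1 h2
    have him : i ≤ m := by omega
    have hj1 : 1 ≤ j := by omega
    have hup : nf τ j = liftS S (nf σ (j-1)) := hhigh him j h1 h2
    by_cases hji : j = i + 1
    · have hmid : nf τ (j-1) = S := by
        subst hji
        rw [Nat.add_sub_cancel, hτ, dbl_nf σ hi him, if_neg (by omega), if_pos rfl]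
      have hL : ascIf τ j = if nf τ j = nf τ (j-1) + 1 then 1 else 0 := by
        unfold ascIf; rw [if_neg (show ¬ j = 0 by omega)]
      subst hji
      rw [hL, hup, hmid, Nat.add_sub_cancel]
      by_cases hi0 : i = 0
      · subst hi0
        have hR : ascIf σ 0 = if nf σ 0 = 0 then 1 else 0 := by
          unfold ascIf; rw [if_pos rfl]
        rw [hR, hS0 rfl]
        refine if_congr ?_ rfl rfl
        unfold liftS; split_ifs <;> omega
      · have hSv := hS1 (by omega)
        have hR : ascIf σ i = if nf σ i = nf σ (i-1) + 1 then 1 else 0 := by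
          unfold ascIf; rw [if_neg hi0]
        rw [hR]
        refine if_congr ?_ rfl rfl
        rw [hSv]
        unfold liftS; split_ifs <;> omega
    · have hj2 : i + 2 ≤ j := by omega
      have hmid : nf τ (j-1) = liftS S (nf σ (j-2)) := by
        have := hhigh him (j-1) (by omega) (by omega)
        rwa [show j - 1 - 1 = j - 2 by omega] at this
      have hL : ascIf τ j = if nf τ j = nf τ (j-1) + 1 then 1 else 0 := by
        unfold ascIf; rw [if_neg (show ¬ j = 0 by omega)]
      have hR : ascIf σ (j-1) = if nf σ (j-1) = nf σ (j-2) + 1 then 1 else 0 := by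
        unfold ascIf; rw [if_neg (show ¬ j - 1 = 0 by omega), show j - 1 - 1 = j - 2 by omega]
      rw [hL, hR, hup, hmid]
      refine if_congr (liftLem S _ _ ?_) rfl rfl
      intro hcon
      by_cases hi0 : i = 0
      · rw [hS0 hi0] at hcon; omega
      · rw [hS1 (by omega)] at hcon
        have : j - 2 = i - 1 := nf_inj σ (by omega)
        omega
  -- sum manipulation
  have e1 : Nasc τ = (∑ j ∈ Finset.Ico 0 i, ascIf τ j) + ∑ j ∈ Finset.Ico i (m+2), ascIf τ j := by
    unfold Nasc
    rw [Finset.range_eq_Ico]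
    exact (Finset.sum_Ico_consecutive (ascIf τ) (Nat.zero_le i) (by omega)).symm
  have e2 : ∑ j ∈ Finset.Ico i (m+2), ascIf τ j
      = ascIf τ i + ∑ j ∈ Finset.Ico (i+1) (m+2), ascIf τ j :=
    Finset.sum_eq_sum_Ico_succ_bot (by omega) _
  have e3 : ∑ j ∈ Finset.Ico (i+1) (m+2), ascIf τ j = ∑ j ∈ Finset.Ico i (m+1), ascIf σ j := by
    rw [Finset.sum_Ico_eq_sum_range, Finset.sum_Ico_eq_sum_range]
    apply Finset.sum_congr (by congr 1 <;> omega)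
    intro x hx
    simp only [Finset.mem_range] at hx
    have := hC (i + 1 + x) (by omega) (by omega)
    rw [this, show i + 1 + x - 1 = i + x by omega]
  have e4 : ∑ j ∈ Finset.Ico 0 i, ascIf τ j = ∑ j ∈ Finset.Ico 0 i, ascIf σ j := by
    apply Finset.sum_congr rfl
    intro x hx
    simp only [Finset.mem_Ico] at hx
    exact hA x hx.2
  have e5 : Nasc σ = (∑ j ∈ Finset.Ico 0 i, ascIf σ j) + ∑ j ∈ Finset.Ico i (m+1), ascIf σ j := by
    unfold Nasc
    rw [Finset.range_eq_Ico]
    exact (Finset.sum_Ico_consecutive (ascIf σ) (Nat.zero_le i) (by omega)).symm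
  rw [e1, e2, e3, e4, hB, e5]
  omega

lemma nf_one {m : ℕ} (j : ℕ) : nf (1 : Equiv.Perm (Fin m)) j = j := by
  unfold nf; split_ifs <;> simp

lemma ascIf_one {m : ℕ} (j : ℕ) : ascIf (1 : Equiv.Perm (Fin m)) j = 1 := by
  unfold ascIf
  by_cases h : j = 0
  · subst h; rw [if_pos rfl, nf_one, if_pos rfl]
  · rw [if_neg h, nf_one, nf_one, if_pos (by omega)]

lemma Nasc_one {m : ℕ} : Nasc (1 : Equiv.Perm (Fin m)) = m + 1 := by
  unfold Nasc
  rw [Finset.sum_congr rfl (fun j _ => ascIf_one j)]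
  simp

lemma ascIf_le_one {m : ℕ} (σ : Equiv.Perm (Fin m)) (j : ℕ) : ascIf σ j ≤ 1 := by
  unfold ascIf; split_ifs <;> omega

lemma eq_one_of_Nasc {m : ℕ} (σ : Equiv.Perm (Fin m)) (h : Nasc σ = m + 1) : σ = 1 := by
  have hall : ∀ j, j ≤ m → ascIf σ j = 1 := by
    by_contra hcon
    push_neg at hcon
    obtain ⟨j0, hj0, hne⟩ := hcon
    have hlt : Nasc σ < ∑ _j ∈ Finset.range (m+1), 1 := by
      apply Finset.sum_lt_sum
      · intro i _; exact ascIf_le_one σ i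
      · exact ⟨j0, Finset.mem_range.2 (by omega), by have := ascIf_le_one σ j0; omega⟩
    simp at hlt
    omega
  have hfix : ∀ j, j ≤ m → nf σ j = j := by
    intro j
    induction j with
    | zero =>
      intro _
      have h0 := hall 0 (by omega)
      unfold ascIf at h0
      rw [if_pos rfl] at h0
      by_contra hne
      rw [if_neg hne] at h0
      omega
    | succ k ih =>
      intro hk
      have hk' := ih (by omega)
      have h1 := hall (k+1) hk
      unfold ascIf at h1
      rw [if_neg (by omega)] at h1
      by_contra hne
      rw [if_neg (by rw [Nat.add_sub_cancel, hk']; exact hne)] at h1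
      omega
  apply Equiv.ext
  intro x
  apply Fin.ext
  have := hfix x (by have := x.isLt; omega)
  unfold nf at this
  rw [dif_pos x.isLt] at this
  exact this

lemma grade_eq_Nasc {m : ℕ} (σ : Equiv.Perm (Fin m)) (hσ : σ ≠ 1) :
    grade σ = Nasc σ := by
  set A := aOf σ with hAdef
  set C := cOf σ with hCdef
  have hAle : A ≤ m := Nat.findGreatest_le m
  have hCle : C ≤ m := Nat.findGreatest_le m
  have hlow : ∀ j, j < A → nf σ j = j := by
    intro j hj
    have hjm : j < m := by omega
    unfold nf; rw [dif_pos hjm]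
    exact congrArg Fin.val (fix_low σ ⟨j, hjm⟩ hj)
  have hhighf : ∀ j, m - C ≤ j → nf σ j = j := by
    intro j hj
    by_cases hjm : j < m
    · unfold nf; rw [dif_pos hjm]
      exact congrArg Fin.val (fix_high σ ⟨j, hjm⟩ hj)
    · exact nf_ge σ (by omega)
  have hAm : A < m := by
    rcases Nat.lt_or_ge A m with h | h
    · exact h
    · exfalso; apply hσ; apply Equiv.ext; intro x
      exact fix_low σ x (by have := x.isLt; omega)
  have hAns : nf σ A ≠ A := by
    have hng := Nat.findGreatest_is_greatest
      (P := fun a => ∀ j : Fin m, (j : ℕ) < a → σ j = j)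
      (show aOf σ < A + 1 by omega) (by omega)
    intro hcon
    apply hng
    intro j hj
    by_cases h : (j : ℕ) < A
    · exact fix_low σ j h
    · have hj' : (j : ℕ) = A := by omega
      apply Fin.ext
      have h2 : nf σ (j : ℕ) = (j : ℕ) := by rw [hj']; exact hcon
      unfold nf at h2
      rw [dif_pos j.isLt] at h2
      exact h2
  have hCm : C < m := by
    rcases Nat.lt_or_ge C m with h | h
    · exact h
    · exfalso; apply hσ; apply Equiv.ext; intro x
      exact fix_high σ x (by omega)
  have hCns : nf σ (m - C - 1) ≠ m - C - 1 := by
    have hng := Nat.findGreatest_is_greatest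
      (P := fun c => ∀ j : Fin m, m - c ≤ (j : ℕ) → σ j = j)
      (show cOf σ < C + 1 by omega) (by omega)
    intro hcon
    apply hng
    intro j hj
    by_cases h : m - C ≤ (j : ℕ)
    · exact fix_high σ j h
    · have hj' : (j : ℕ) = m - C - 1 := by omega
      apply Fin.ext
      have : nf σ (j : ℕ) = (j : ℕ) := by rw [hj']; exact hcon
      unfold nf at this
      rw [dif_pos j.isLt] at this
      exact this
  have hAC : A < m - C := by
    rcases Nat.lt_or_ge A (m - C) with h | h
    · exact h
    · exact absurd (hhighf A h) hAns
  have hmid : ∀ j, A ≤ j → j < m - C → A ≤ nf σ j ∧ nf σ j < m - C := by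
    intro j h1 h2
    have hjm : j < m := by omega
    have := mid_mem σ ⟨j, hjm⟩ ⟨h1, h2⟩
    unfold nf
    rw [dif_pos hjm]
    exact this
  set E := m - C with hEdef
  set L := midLen σ with hLdef
  have hLE : L = E - A := by unfold midLen at hLdef; omega
  have hL1 : 1 ≤ L := by omega
  -- value of midPerm
  have hmidval : ∀ s : Fin L, (midPerm σ s : ℕ) = nf σ (A + (s : ℕ)) - A := by
    intro s
    have hs : (s : ℕ) < L := s.isLt
    unfold midPerm
    rw [Equiv.ofBijective_apply]
    unfold midFun
    simp only
    congr 1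
    unfold nf
    rw [dif_pos (by omega)]
  -- bOf as a range sum
  have hbOf : bOf σ = ∑ x ∈ Finset.range L,
      (if h2 : x + 1 < L then (if nf σ (A + x + 1) = nf σ (A + x) + 1 then 1 else 0) else 0) := by
    unfold bOf
    rw [Finset.card_filter]
    rw [← Fin.sum_univ_eq_sum_range]
    apply Finset.sum_congr rfl
    intro s _
    have hs := s.isLt
    by_cases h2 : (s : ℕ) + 1 < L
    · rw [dif_pos h2]
      have hm1 := hmid (A + (s : ℕ)) (by omega) (by omega)
      have hm2 := hmid (A + (s : ℕ) + 1) (by omega) (by omega)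
      have e1 : (midPerm σ ⟨(s : ℕ) + 1, h2⟩ : ℕ) = nf σ (A + (s : ℕ) + 1) - A := by
        have h3 := hmidval ⟨(s : ℕ) + 1, h2⟩
        simp only [Fin.val_mk] at h3
        rwa [show A + ((s : ℕ) + 1) = A + (s : ℕ) + 1 from by omega] at h3
      have e2 : (midPerm σ s : ℕ) = nf σ (A + (s : ℕ)) - A := hmidval s
      refine if_congr ?_ rfl rfl
      constructor
      · rintro ⟨h, hh⟩
        rw [e1, e2] at hh
        omega
      · intro hh
        refine ⟨h2, ?_⟩
        rw [e1, e2]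
        omega
    · rw [dif_neg h2]
      rw [if_neg]
      rintro ⟨h, -⟩
      exact h2 h
  -- main sum decomposition
  have step1 : Nasc σ = (∑ j ∈ Finset.Ico 0 A, ascIf σ j) + ∑ j ∈ Finset.Ico A (m+1), ascIf σ j := by
    unfold Nasc; rw [Finset.range_eq_Ico]
    exact (Finset.sum_Ico_consecutive (ascIf σ) (Nat.zero_le A) (by omega)).symm
  have step2 : ∑ j ∈ Finset.Ico A (m+1), ascIf σ j
      = ascIf σ A + ∑ j ∈ Finset.Ico (A+1) (m+1), ascIf σ j :=
    Finset.sum_eq_sum_Ico_succ_bot (by omega) _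
  have step3 : ∑ j ∈ Finset.Ico (A+1) (m+1), ascIf σ j
      = (∑ j ∈ Finset.Ico (A+1) E, ascIf σ j) + ∑ j ∈ Finset.Ico E (m+1), ascIf σ j :=
    (Finset.sum_Ico_consecutive (ascIf σ) (by omega) (by omega)).symm
  have step4 : ∑ j ∈ Finset.Ico E (m+1), ascIf σ j
      = ascIf σ E + ∑ j ∈ Finset.Ico (E+1) (m+1), ascIf σ j :=
    Finset.sum_eq_sum_Ico_succ_bot (by omega) _
  have s1 : ∑ j ∈ Finset.Ico 0 A, ascIf σ j = A := by
    rw [Finset.sum_congr rfl (fun j hj => ?_), Finset.sum_const, Nat.card_Ico, smul_eq_mul,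
      mul_one, Nat.sub_zero]
    simp only [Finset.mem_Ico] at hj
    unfold ascIf
    by_cases h : j = 0
    · subst h; rw [if_pos rfl, hlow 0 hj.2, if_pos rfl]
    · rw [if_neg h, hlow j hj.2, hlow (j-1) (by omega), if_pos (by omega)]
  have s2 : ascIf σ A = 0 := by
    unfold ascIf
    by_cases h : A = 0
    · rw [if_pos h, if_neg (by rw [h] at hAns; exact hAns)]
    · rw [if_neg h, if_neg]
      rw [hlow (A-1) (by omega)]
      intro hcon
      apply hAns
      rw [hcon]
      omega
  have s4 : ascIf σ E = 0 := by
    unfold ascIf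
    rw [if_neg (by omega), hhighf E (by omega), if_neg]
    intro hcon
    apply hCns
    omega
  have s5 : ∑ j ∈ Finset.Ico (E+1) (m+1), ascIf σ j = C := by
    rw [Finset.sum_congr rfl (fun j hj => ?_), Finset.sum_const, Nat.card_Ico, smul_eq_mul,
      mul_one]
    · omega
    simp only [Finset.mem_Ico] at hj
    unfold ascIf
    rw [if_neg (by omega), hhighf j (by omega), hhighf (j-1) (by omega), if_pos (by omega)]
  have s3 : ∑ j ∈ Finset.Ico (A+1) E, ascIf σ j = bOf σ := by
    rw [hbOf, Finset.sum_Ico_eq_sum_range]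
    have hEL : E - (A + 1) = L - 1 := by omega
    rw [hEL]
    have hsplit : ∑ x ∈ Finset.range L,
        (if h2 : x + 1 < L then (if nf σ (A + x + 1) = nf σ (A + x) + 1 then 1 else 0) else 0)
        = ∑ x ∈ Finset.range (L-1),
        (if h2 : x + 1 < L then (if nf σ (A + x + 1) = nf σ (A + x) + 1 then 1 else 0) else 0) := by
      rw [show L = (L - 1) + 1 by omega, Finset.sum_range_succ]
      rw [dif_neg (by omega)]
      rw [show (L - 1) + 1 - 1 = L - 1 by omega]
      omega
    rw [hsplit]
    apply Finset.sum_congr rfl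
    intro x hx
    simp only [Finset.mem_range] at hx
    rw [dif_pos (by omega)]
    unfold ascIf
    rw [if_neg (by omega)]
    refine if_congr ?_ rfl rfl
    rw [show A + 1 + x - 1 = A + x by omega, show A + 1 + x = A + x + 1 by omega]
  have hgr : grade σ = A + bOf σ + C := by unfold grade; rw [if_neg hσ]
  rw [hgr, step1, step2, step3, step4, s1, s2, s3, s4, s5]
  omega


/-- For every `m ≥ 1`, every `σ ∈ Σ_m` and every `0 ≤ i ≤ m+1`, the doubling map raises
the grade by exactly one: `g(d_i(σ)) = g(σ) + 1`. -/
theorem grade_dbl (m : ℕ) (hm : 1 ≤ m) (σ : Equiv.Perm (Fin m)) (i : ℕ) (hi : i ≤ m + 1) :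
    grade (dbl σ i) = grade σ + 1 := by
  by_cases hσ : σ = 1
  · subst hσ
    have h1 : Nasc (dbl (1 : Equiv.Perm (Fin m)) i) = (m + 1) + 1 := by
      rw [Nasc_dbl _ hm hi, Nasc_one]
    have h2 : dbl (1 : Equiv.Perm (Fin m)) i = 1 := eq_one_of_Nasc _ h1
    rw [h2]
    unfold grade
    rw [if_pos rfl, if_pos rfl]
    omega
  · have hτ : dbl σ i ≠ 1 := by
      intro hcon
      apply hσ
      apply eq_one_of_Nasc
      have hd := Nasc_dbl σ hm hi
      rw [hcon, Nasc_one] at hd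
      omega
    rw [grade_eq_Nasc _ hτ, grade_eq_Nasc _ hσ, Nasc_dbl σ hm hi]

end MarklOps
end

section
/- Let χ ∈ Σ_n be a primitive permutation with n ≥ 2 and let m ≥ 1. A permutation σ ∈ Σ_m satisfies κ(σ) = χ if and only if there exist integers a, c ≥ 0 and m₁,…,m_n ≥ 1 with a + c + m₁ + ⋯ + m_n = m such that σ = id_a × χ⟨m₁,…,m_n⟩ × id_c; moreover, such (a, c, m₁,…,m_n) are uniquely determined by σ. -/
namespace MarklOps

/-- The set of least elements (class starts) of the equivalence classes of the relation
generated by `s ∼ s+1` whenever `ω(σ)(s+1) = ω(σ)(s)+1` on the middle block of `σ`. -/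
noncomputable def startSet {m : ℕ} (σ : Equiv.Perm (Fin m)) : Finset (Fin (midLen σ)) :=
  Finset.univ.filter fun s : Fin (midLen σ) =>
    (s : ℕ) = 0 ∨ ∀ _h : 0 < (s : ℕ),
      (midPerm σ s : ℕ) ≠ (midPerm σ ⟨(s : ℕ) - 1, by have := s.isLt; omega⟩ : ℕ) + 1

/-- The skeleton `κ(σ) ∈ Σ_{m−g(σ)}`, bundled with its arity: `skel σ = ⟨m − g(σ), κ(σ)⟩`.
It sends `t` to the rank, among the images of all classes ordered by their least elements,
of the image under `ω(σ)` of the `t`-th class (classes ordered by their least elements);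
since each class is an interval mapped by `ω(σ)` onto an interval, this is the rank of
`ω(σ)(s_t)` among the values of `ω(σ)` at all class starts, where `s_t` is the `t`-th class
start.  By convention `κ(id_m) = id_1`. -/
noncomputable def skel {m : ℕ} (σ : Equiv.Perm (Fin m)) : Σ n : ℕ, Equiv.Perm (Fin n) :=
  if σ = 1 then ⟨1, 1⟩
  else
    ⟨(startSet σ).card,
      ((startSet σ).orderIsoOfFin rfl).toEquiv.trans
        ((Equiv.ofBijective
            (fun x : {y // y ∈ startSet σ} =>
              (⟨midPerm σ x.1, Finset.mem_image_of_mem _ x.2⟩ :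
                {y // y ∈ (startSet σ).image (fun s => midPerm σ s)}))
            ⟨fun x y hxy => Subtype.ext ((midPerm σ).injective (congrArg Subtype.val hxy)),
             fun y => by
               obtain ⟨x, hx, hxy⟩ := Finset.mem_image.mp y.2
               exact ⟨⟨x, hx⟩, Subtype.ext hxy⟩⟩).trans
          (((startSet σ).image (fun s => midPerm σ s)).orderIsoOfFin
            (Finset.card_image_of_injective _ (midPerm σ).injective)).toEquiv.symm)⟩

/-- `σ = id_a × χ⟨m₁,…,m_n⟩ × id_c`, expressed pointwise, for `x = (a, c, (m₁,…,m_n))`: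
all `m_t ≥ 1`, `a + (m₁+⋯+m_n) + c = m`, `σ` fixes the first `a` and the last `c` points,
and for each `t` and `0 ≤ r < m_t` it sends the input `a + (Σ_{t'<t} m_{t'}) + r` to
`a + (Σ_{t' : χ(t') < χ(t)} m_{t'}) + r`. -/
def IsBlockExpansion {n m : ℕ} (χ : Equiv.Perm (Fin n)) (σ : Equiv.Perm (Fin m))
    (x : ℕ × ℕ × (Fin n → ℕ)) : Prop :=
  (∀ t : Fin n, 1 ≤ x.2.2 t) ∧
  x.1 + (∑ t, x.2.2 t) + x.2.1 = m ∧
  ∀ j : Fin m,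
    ((j : ℕ) < x.1 → σ j = j) ∧
    (x.1 + (∑ t, x.2.2 t) ≤ (j : ℕ) → σ j = j) ∧
    (∀ t : Fin n, ∀ r : ℕ, r < x.2.2 t →
      (j : ℕ) = x.1 + (∑ t' ∈ Finset.univ.filter (fun t' => t' < t), x.2.2 t') + r →
      (σ j : ℕ) = x.1 + (∑ t' ∈ Finset.univ.filter (fun t' => χ t' < χ t), x.2.2 t') + r)


lemma aOf_le {m : ℕ} (σ : Equiv.Perm (Fin m)) : aOf σ ≤ m := Nat.findGreatest_le m
lemma cOf_le {m : ℕ} (σ : Equiv.Perm (Fin m)) : cOf σ ≤ m := Nat.findGreatest_le m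

lemma aOf_eq {m : ℕ} (σ : Equiv.Perm (Fin m)) (a : ℕ) (ham : a ≤ m)
    (hfix : ∀ j : Fin m, (j : ℕ) < a → σ j = j)
    (hmove : ∀ h : a < m, σ ⟨a, h⟩ ≠ ⟨a, h⟩) : aOf σ = a := by
  have h1 : a ≤ aOf σ := Nat.le_findGreatest ham hfix
  rcases Nat.lt_or_ge a (aOf σ) with h2 | h2
  · have ham' : a < m := lt_of_lt_of_le h2 (aOf_le σ)
    exact absurd (fix_low σ ⟨a, ham'⟩ h2) (hmove ham')
  · omega

lemma cOf_eq {m : ℕ} (σ : Equiv.Perm (Fin m)) (c : ℕ) (hcm : c ≤ m)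
    (hfix : ∀ j : Fin m, m - c ≤ (j : ℕ) → σ j = j)
    (hmove : ∀ h : c < m, σ ⟨m - c - 1, by omega⟩ ≠ ⟨m - c - 1, by omega⟩) : cOf σ = c := by
  have h1 : c ≤ cOf σ := Nat.le_findGreatest hcm hfix
  rcases Nat.lt_or_ge c (cOf σ) with h2 | h2
  · have hcm' : c < m := lt_of_lt_of_le h2 (cOf_le σ)
    have := fix_high σ ⟨m - c - 1, by omega⟩ (by simp; omega)
    exact absurd this (hmove hcm')
  · omega

lemma midLen_pos {m : ℕ} (σ : Equiv.Perm (Fin m)) (hσ : σ ≠ 1) : 0 < midLen σ := by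
  by_contra h
  apply hσ
  ext j
  rcases Nat.lt_or_ge (j : ℕ) (aOf σ) with hj | hj
  · rw [fix_low σ j hj]; rfl
  · rw [fix_high σ j (by unfold midLen at h; omega)]; rfl

lemma aOf_add_lt {m : ℕ} (σ : Equiv.Perm (Fin m)) {p : ℕ} (hp : p < midLen σ) :
    aOf σ + p < m := by unfold midLen at hp; omega

lemma sigma_mid_val {m : ℕ} (σ : Equiv.Perm (Fin m)) {p : ℕ} (hp : p < midLen σ) :
    (σ ⟨aOf σ + p, aOf_add_lt σ hp⟩ : ℕ) = aOf σ + (midPerm σ ⟨p, hp⟩ : ℕ) := by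
  have hm := mid_mem σ ⟨aOf σ + p, aOf_add_lt σ hp⟩
    ⟨by simp, by simp; unfold midLen at hp; omega⟩
  show _ = aOf σ + ((midFun σ ⟨p, hp⟩ : ℕ))
  unfold midFun
  simp only
  omega

lemma grade_zero_ne_one {n : ℕ} (hn : 2 ≤ n) (χ : Equiv.Perm (Fin n)) (hχ : grade χ = 0) :
    χ ≠ 1 := by
  intro h
  rw [grade, if_pos h] at hχ
  omega

lemma grade_zero_parts {n : ℕ} (hn : 2 ≤ n) (χ : Equiv.Perm (Fin n)) (hχ : grade χ = 0) :
    aOf χ = 0 ∧ bOf χ = 0 ∧ cOf χ = 0 := by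
  rw [grade, if_neg (grade_zero_ne_one hn χ hχ)] at hχ
  omega

lemma grade_zero_move_zero {n : ℕ} (hn : 2 ≤ n) (χ : Equiv.Perm (Fin n)) (hχ : grade χ = 0)
    (h0n : 0 < n) : (0 : ℕ) < (χ ⟨0, h0n⟩ : ℕ) := by
  have ha := (grade_zero_parts hn χ hχ).1
  have h : ¬ (∀ j : Fin n, (j : ℕ) < 1 → χ j = j) :=
    Nat.findGreatest_is_greatest (P := fun a => ∀ j : Fin n, (j : ℕ) < a → χ j = j)
      (n := n) (k := 1) (by rw [aOf] at ha; omega) (by omega)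
  push_neg at h
  obtain ⟨j, hj1, hj2⟩ := h
  have hjv : (j : ℕ) = 0 := by omega
  rw [show (⟨0, h0n⟩ : Fin n) = j from Fin.ext hjv.symm]
  have : (χ j : ℕ) ≠ (j : ℕ) := fun h => hj2 (Fin.ext h)
  omega

lemma grade_zero_move_last {n : ℕ} (hn : 2 ≤ n) (χ : Equiv.Perm (Fin n)) (hχ : grade χ = 0)
    (hln : n - 1 < n) : (χ ⟨n - 1, hln⟩ : ℕ) < n - 1 := by
  have hc := (grade_zero_parts hn χ hχ).2.2
  have h : ¬ (∀ j : Fin n, n - 1 ≤ (j : ℕ) → χ j = j) :=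
    Nat.findGreatest_is_greatest (P := fun c => ∀ j : Fin n, n - c ≤ (j : ℕ) → χ j = j)
      (n := n) (k := 1) (by rw [cOf] at hc; omega) (by omega)
  push_neg at h
  obtain ⟨j, hj1, hj2⟩ := h
  have hjv : (j : ℕ) = n - 1 := by have := j.isLt; omega
  rw [show (⟨n - 1, hln⟩ : Fin n) = j from Fin.ext hjv.symm]
  have h1 : (χ j : ℕ) ≠ (j : ℕ) := fun h => hj2 (Fin.ext h)
  have h2 := (χ j).isLt
  have h3 := j.isLt
  omega

lemma midPerm_val_aOf_zero {n : ℕ} (χ : Equiv.Perm (Fin n)) (ha : aOf χ = 0) {p : ℕ}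
    (hp : p < midLen χ) (hpn : p < n) :
    (midPerm χ ⟨p, hp⟩ : ℕ) = (χ ⟨p, hpn⟩ : ℕ) := by
  have h := sigma_mid_val χ hp
  rw [show (⟨aOf χ + p, aOf_add_lt χ hp⟩ : Fin n) = ⟨p, hpn⟩ from Fin.ext (show aOf χ + p = p by omega)] at h
  omega

lemma grade_zero_no_consec {n : ℕ} (hn : 2 ≤ n) (χ : Equiv.Perm (Fin n)) (hχ : grade χ = 0) :
    ∀ s : ℕ, ∀ h1 : s + 1 < n, ∀ h2 : s < n,
      (χ ⟨s + 1, h1⟩ : ℕ) ≠ (χ ⟨s, h2⟩ : ℕ) + 1 := by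
  obtain ⟨ha, hb, hc⟩ := grade_zero_parts hn χ hχ
  have hmid : midLen χ = n := by unfold midLen; omega
  intro s h1 h2
  have hempty := Finset.card_eq_zero.mp hb
  have hnot := Finset.eq_empty_iff_forall_notMem.mp hempty ⟨s, by omega⟩
  rw [Finset.mem_filter] at hnot
  push_neg at hnot
  have hkey := hnot (Finset.mem_univ _) (by omega : (s : ℕ) + 1 < midLen χ)
  simp only at hkey
  rw [midPerm_val_aOf_zero χ ha _ h1, midPerm_val_aOf_zero χ ha _ (by omega)] at hkey
  exact hkey

/-- Sum of `mf` over indices whose `e`-value is `< k`. -/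
def gsum {n : ℕ} (e : Equiv.Perm (Fin n)) (mf : Fin n → ℕ) (k : ℕ) : ℕ :=
  ∑ t ∈ Finset.univ.filter (fun t : Fin n => (e t : ℕ) < k), mf t

lemma filter_emap_lt_succ {n : ℕ} (e : Equiv.Perm (Fin n)) (k : ℕ) (hk : k < n) :
    (Finset.univ.filter fun t : Fin n => (e t : ℕ) < k + 1)
      = insert (e.symm ⟨k, hk⟩) (Finset.univ.filter fun t : Fin n => (e t : ℕ) < k) := by
  ext t
  simp only [Finset.mem_filter, Finset.mem_univ, true_and, Finset.mem_insert]
  constructor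
  · intro h
    rcases Nat.lt_or_ge (e t : ℕ) k with h' | h'
    · exact Or.inr h'
    · left
      have : e t = ⟨k, hk⟩ := Fin.ext (show (e t : ℕ) = k by omega)
      rw [← this, Equiv.symm_apply_apply]
  · rintro (rfl | h)
    · rw [Equiv.apply_symm_apply]; exact Nat.lt_succ_self k
    · omega

lemma gsum_zero {n : ℕ} (e : Equiv.Perm (Fin n)) (mf : Fin n → ℕ) : gsum e mf 0 = 0 := by
  unfold gsum
  rw [Finset.filter_false_of_mem (fun x _ => by omega), Finset.sum_empty]

lemma gsum_succ {n : ℕ} (e : Equiv.Perm (Fin n)) (mf : Fin n → ℕ) (k : ℕ) (hk : k < n) :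
    gsum e mf (k + 1) = gsum e mf k + mf (e.symm ⟨k, hk⟩) := by
  unfold gsum
  rw [filter_emap_lt_succ e k hk, Finset.sum_insert (by
    simp only [Finset.mem_filter, Finset.mem_univ, true_and, Equiv.apply_symm_apply]
    omega)]
  omega

lemma gsum_top {n : ℕ} (e : Equiv.Perm (Fin n)) (mf : Fin n → ℕ) (k : ℕ) (hk : n ≤ k) :
    gsum e mf k = ∑ t, mf t := by
  unfold gsum
  congr 1
  rw [Finset.filter_true_of_mem (fun x _ => lt_of_lt_of_le (e x).isLt hk)]

lemma gsum_le {n : ℕ} (e : Equiv.Perm (Fin n)) (mf : Fin n → ℕ) {k l : ℕ} (hkl : k ≤ l) :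
    gsum e mf k ≤ gsum e mf l := by
  apply Finset.sum_le_sum_of_subset
  intro t ht
  simp only [Finset.mem_filter, Finset.mem_univ, true_and] at ht ⊢
  omega

lemma gsum_lt {n : ℕ} (e : Equiv.Perm (Fin n)) (mf : Fin n → ℕ) (hmf : ∀ t, 1 ≤ mf t)
    {k l : ℕ} (hkl : k < l) (hl : k < n) : gsum e mf k < gsum e mf l := by
  have h1 := gsum_succ e mf k hl
  have h2 := gsum_le e mf (show k + 1 ≤ l by omega)
  have h3 := hmf (e.symm ⟨k, hl⟩)
  omega

lemma gsum_le_total {n : ℕ} (e : Equiv.Perm (Fin n)) (mf : Fin n → ℕ) (k : ℕ) :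
    gsum e mf k ≤ ∑ t, mf t := by
  rw [← gsum_top e mf (n + k) (by omega)]
  exact gsum_le e mf (by omega)

lemma sum_filter_lt_eq {n : ℕ} (mf : Fin n → ℕ) (t : Fin n) :
    ∑ t' ∈ Finset.univ.filter (fun t' => t' < t), mf t' = gsum 1 mf (t : ℕ) := by
  unfold gsum
  apply Finset.sum_congr _ (fun _ _ => rfl)
  apply Finset.filter_congr
  intro x _
  simp only [Equiv.Perm.one_apply]
  exact Fin.lt_def

lemma sum_filter_chi_eq {n : ℕ} (χ : Equiv.Perm (Fin n)) (mf : Fin n → ℕ) (t : Fin n) :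
    ∑ t' ∈ Finset.univ.filter (fun t' => χ t' < χ t), mf t' = gsum χ mf ((χ t : ℕ)) := by
  unfold gsum
  apply Finset.sum_congr _ (fun _ _ => rfl)
  apply Finset.filter_congr
  intro x _
  exact Fin.lt_def

lemma exists_block {n : ℕ} (mf : Fin n → ℕ) (hmf : ∀ t, 1 ≤ mf t) :
    ∀ p : ℕ, p < (∑ t, mf t) →
      ∃ (t : Fin n) (r : ℕ), r < mf t ∧ p = gsum 1 mf (t : ℕ) + r := by
  intro p
  induction p with
  | zero =>
    intro hp
    have hn : 0 < n := by
      by_contra h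
      have h0 : n = 0 := by omega
      subst h0
      simp at hp
    exact ⟨⟨0, hn⟩, 0, hmf _, by rw [gsum_zero]⟩
  | succ p ih =>
    intro hp
    obtain ⟨t, r, hr, hpr⟩ := ih (by omega)
    rcases Nat.lt_or_ge (r + 1) (mf t) with h | h
    · exact ⟨t, r + 1, h, by omega⟩
    · have hr1 : r + 1 = mf t := by omega
      have hsucc := gsum_succ 1 mf (t : ℕ) t.isLt
      have hsymm : (1 : Equiv.Perm (Fin n)).symm ⟨(t : ℕ), t.isLt⟩ = t := by
        simp [Fin.ext_iff]
        rfl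
      rw [hsymm] at hsucc
      rcases Nat.lt_or_ge ((t : ℕ) + 1) n with h2 | h2
      · exact ⟨⟨(t : ℕ) + 1, h2⟩, 0, hmf _, by simp only [Fin.val_mk]; omega⟩
      · exfalso
        have := gsum_top 1 mf ((t : ℕ) + 1) (by omega)
        omega

lemma one_symm_apply {n : ℕ} (j : Fin n) : (1 : Equiv.Perm (Fin n)).symm j = j := rfl

lemma gsum_one_succ {n : ℕ} (mf : Fin n → ℕ) (k : ℕ) (hk : k < n) :
    gsum 1 mf (k + 1) = gsum 1 mf k + mf ⟨k, hk⟩ := by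
  rw [gsum_succ 1 mf k hk, one_symm_apply]

lemma gsum_chi_succ {n : ℕ} (χ : Equiv.Perm (Fin n)) (mf : Fin n → ℕ) (t : Fin n) :
    gsum χ mf ((χ t : ℕ) + 1) = gsum χ mf (χ t) + mf t := by
  rw [gsum_succ χ mf _ (χ t).isLt,
    show (⟨((χ t) : ℕ), (χ t).isLt⟩ : Fin n) = χ t from Fin.ext rfl,
    Equiv.symm_apply_apply]

lemma gsum_one_lt_total {n : ℕ} (mf : Fin n → ℕ) (hmf : ∀ t, 1 ≤ mf t) (t : Fin n) :
    gsum 1 mf (t : ℕ) + mf t ≤ ∑ t', mf t' := by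
  rw [← gsum_one_succ mf (t : ℕ) t.isLt]
  exact gsum_le_total 1 mf _

lemma gsum_chi_lt_total {n : ℕ} (χ : Equiv.Perm (Fin n)) (mf : Fin n → ℕ) (t : Fin n) :
    gsum χ mf ((χ t : ℕ)) + mf t ≤ ∑ t', mf t' := by
  rw [← gsum_chi_succ χ mf t]
  exact gsum_le_total χ mf _

lemma gsum_inj {n : ℕ} (e : Equiv.Perm (Fin n)) (mf : Fin n → ℕ) (hmf : ∀ t, 1 ≤ mf t)
    {k l : ℕ} (hk : k < n) (hl : l < n) (h : gsum e mf k = gsum e mf l) : k = l := by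
  rcases Nat.lt_trichotomy k l with h' | h' | h'
  · exact absurd h (Nat.ne_of_lt (gsum_lt e mf hmf h' hk))
  · exact h'
  · exact absurd h.symm (Nat.ne_of_lt (gsum_lt e mf hmf h' hl))

lemma sigma_perm_ext {k n : ℕ} (h : k = n) (π : Equiv.Perm (Fin k)) (χ : Equiv.Perm (Fin n))
    (hvals : ∀ i : Fin k, (π i : ℕ) = (χ (Fin.cast h i) : ℕ)) :
    (⟨k, π⟩ : Σ n : ℕ, Equiv.Perm (Fin n)) = ⟨n, χ⟩ := by
  subst h
  congr 1
  exact Equiv.ext fun i => Fin.ext (hvals i)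

lemma mem_startSet_iff {m : ℕ} (σ : Equiv.Perm (Fin m)) (p : Fin (midLen σ)) :
    p ∈ startSet σ ↔ ((p : ℕ) = 0 ∨ ∀ q : Fin (midLen σ), (q : ℕ) + 1 = (p : ℕ) →
      (midPerm σ p : ℕ) ≠ (midPerm σ q : ℕ) + 1) := by
  rw [startSet, Finset.mem_filter]
  simp only [Finset.mem_univ, true_and]
  constructor
  · rintro (h | h)
    · exact Or.inl h
    · right
      intro q hq
      have h' := h (by omega)
      have hqe : ∀ pr : ((p : ℕ) - 1 < midLen σ), (⟨(p : ℕ) - 1, pr⟩ : Fin (midLen σ)) = q :=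
        fun pr => Fin.ext (by show (p : ℕ) - 1 = (q : ℕ); omega)
      rw [hqe] at h'
      exact h'
  · rintro (h | h)
    · exact Or.inl h
    · right
      refine fun hp0 => h _ ?_
      show (p : ℕ) - 1 + 1 = (p : ℕ)
      omega

lemma rev_main {n m : ℕ} (hn : 2 ≤ n) (χ : Equiv.Perm (Fin n)) (hχ : grade χ = 0)
    (σ : Equiv.Perm (Fin m)) (x : ℕ × ℕ × (Fin n → ℕ)) (hx : IsBlockExpansion χ σ x) :
    aOf σ = x.1 ∧ cOf σ = x.2.1 ∧ ∃ hcard : (startSet σ).card = n,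
      (∀ j : Fin (startSet σ).card,
        (((startSet σ).orderEmbOfFin rfl j : Fin (midLen σ)) : ℕ) = gsum 1 x.2.2 (j : ℕ)) ∧
      skel σ = ⟨n, χ⟩ := by
  obtain ⟨hmf, hsum, hpt⟩ := hx
  set a := x.1 with ha_def
  set c := x.2.1 with hc_def
  set mf := x.2.2 with hmf_def
  set M := ∑ t, mf t with hM_def
  have hn0 : 0 < n := by omega
  have hM1 : 1 ≤ M := le_trans (hmf ⟨0, hn0⟩)
    (Finset.single_le_sum (fun i _ => Nat.zero_le _) (Finset.mem_univ _))
  have ham : a + M + c = m := hsum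
  have hchi0 := grade_zero_move_zero hn χ hχ hn0
  -- the first point after the prefix is moved
  have hmove0 : ∀ j : Fin m, (j : ℕ) = a → σ j ≠ j := by
    intro j hj hcontra
    have h0 := (hpt j).2.2 ⟨0, hn0⟩ 0 (hmf _) (by
      rw [sum_filter_lt_eq mf ⟨0, hn0⟩]
      have hg0 : gsum 1 mf ((⟨0, hn0⟩ : Fin n) : ℕ) = 0 := gsum_zero 1 mf
      omega)
    rw [sum_filter_chi_eq χ mf ⟨0, hn0⟩] at h0
    have h1 : 1 ≤ gsum χ mf ((χ ⟨0, hn0⟩ : ℕ)) := by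
      have h2 : gsum χ mf 1 ≤ gsum χ mf ((χ ⟨0, hn0⟩ : ℕ)) := gsum_le χ mf (by omega)
      have h3 : gsum χ mf 1 = gsum χ mf 0 + mf (χ.symm ⟨0, hn0⟩) := gsum_succ χ mf 0 hn0
      have h4 := hmf (χ.symm ⟨0, hn0⟩)
      have h5 : gsum χ mf 0 = 0 := gsum_zero χ mf
      omega
    have h6 := congrArg Fin.val hcontra
    omega
  have ha : aOf σ = a := by
    refine aOf_eq σ a (by omega) (fun j hj => (hpt j).1 hj) (fun h => hmove0 ⟨a, h⟩ rfl)
  have hlast : (n : ℕ) - 1 < n := by omega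
  have hchiL := grade_zero_move_last hn χ hχ hlast
  have hSn : gsum 1 mf (n - 1) + mf ⟨n - 1, hlast⟩ = M := by
    have h1 : gsum 1 mf (n - 1 + 1) = gsum 1 mf (n - 1) + mf ⟨n - 1, hlast⟩ :=
      gsum_one_succ mf (n - 1) hlast
    have h2 : gsum 1 mf (n - 1 + 1) = M := gsum_top 1 mf _ (by omega)
    omega
  have hmovec : ∀ j : Fin m, (j : ℕ) = m - c - 1 → c < m → σ j ≠ j := by
    intro j hj h hcontra
    have h0 := (hpt j).2.2 ⟨n - 1, hlast⟩ (mf ⟨n - 1, hlast⟩ - 1)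
      (by have := hmf ⟨n - 1, hlast⟩; omega) (by
        rw [sum_filter_lt_eq mf ⟨n - 1, hlast⟩]
        have h9 : ((⟨n - 1, hlast⟩ : Fin n) : ℕ) = n - 1 := rfl
        rw [h9]
        have := hmf ⟨n - 1, hlast⟩
        omega)
    rw [sum_filter_chi_eq χ mf ⟨n - 1, hlast⟩] at h0
    have hT : gsum χ mf ((χ ⟨n - 1, hlast⟩ : ℕ)) + mf ⟨n - 1, hlast⟩ < M := by
      have h1 : gsum χ mf ((χ ⟨n - 1, hlast⟩ : ℕ) + 1)
          = gsum χ mf ((χ ⟨n - 1, hlast⟩ : ℕ)) + mf ⟨n - 1, hlast⟩ :=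
        gsum_chi_succ χ mf ⟨n - 1, hlast⟩
      have h2 : gsum χ mf ((χ ⟨n - 1, hlast⟩ : ℕ) + 1) < gsum χ mf n :=
        gsum_lt χ mf hmf (by omega) (by omega)
      have h3 : gsum χ mf n = M := gsum_top χ mf n (le_refl n)
      omega
    have h6 := congrArg Fin.val hcontra
    have := hmf ⟨n - 1, hlast⟩
    omega
  have hc : cOf σ = c := by
    refine cOf_eq σ c (by omega) (fun j hj => (hpt j).2.1 (by omega))
      (fun h => hmovec ⟨m - c - 1, by omega⟩ rfl h)
  have hL : midLen σ = M := by unfold midLen; omega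
  -- value of the middle permutation on block `t` at offset `r`
  have hblock_lt : ∀ (t : Fin n) (r : ℕ), r < mf t → gsum 1 mf (t : ℕ) + r < midLen σ := by
    intro t r hr
    have := gsum_one_lt_total mf hmf t
    omega
  have hval : ∀ (t : Fin n) (r : ℕ) (hr : r < mf t) (hp : gsum 1 mf (t : ℕ) + r < midLen σ),
      (midPerm σ ⟨gsum 1 mf (t : ℕ) + r, hp⟩ : ℕ) = gsum χ mf ((χ t : ℕ)) + r := by
    intro t r hr hp
    have h0 := (hpt ⟨a + (gsum 1 mf (t : ℕ) + r), by unfold midLen at hp; omega⟩).2.2 t r hr (by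
      rw [sum_filter_lt_eq mf t]
      show a + (gsum 1 mf (t : ℕ) + r) = a + gsum 1 mf (t : ℕ) + r
      omega)
    rw [sum_filter_chi_eq χ mf t] at h0
    have h1 := sigma_mid_val σ hp
    rw [show (⟨aOf σ + (gsum 1 mf (t : ℕ) + r), aOf_add_lt σ hp⟩ : Fin m)
      = ⟨a + (gsum 1 mf (t : ℕ) + r), by unfold midLen at hp; omega⟩ from
        Fin.ext (by show aOf σ + _ = a + _; omega)] at h1
    omega
  -- no two consecutive blocks have consecutive images (primitivity of χ)
  have hterm : ∀ t u : Fin n, (t : ℕ) = (u : ℕ) + 1 →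
      gsum χ mf ((χ t : ℕ)) ≠ gsum χ mf ((χ u : ℕ)) + mf u := by
    intro t u htu heq
    have hchis : gsum χ mf ((χ u : ℕ) + 1) = gsum χ mf ((χ u : ℕ)) + mf u := gsum_chi_succ χ mf u
    have hne : t ≠ u := fun h => by rw [h] at htu; omega
    have hchine : (χ t : ℕ) ≠ (χ u : ℕ) := fun h => hne (χ.injective (Fin.ext h))
    rcases Nat.lt_trichotomy ((χ t : ℕ)) ((χ u : ℕ) + 1) with h2 | h2 | h2
    · have : gsum χ mf ((χ t : ℕ)) < gsum χ mf ((χ u : ℕ) + 1) :=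
        gsum_lt χ mf hmf (by omega) (by have := (χ u).isLt; omega)
      omega
    · have pt : (u : ℕ) + 1 < n := by have := t.isLt; omega
      have pu : (u : ℕ) < n := u.isLt
      have hnc := grade_zero_no_consec hn χ hχ (u : ℕ) pt pu
      rw [show (⟨(u : ℕ) + 1, pt⟩ : Fin n) = t from Fin.ext htu.symm,
        show (⟨(u : ℕ), pu⟩ : Fin n) = u from Fin.ext rfl] at hnc
      exact hnc h2
    · have : gsum χ mf ((χ u : ℕ) + 1) < gsum χ mf ((χ t : ℕ)) :=
        gsum_lt χ mf hmf h2 (by have := (χ t).isLt; omega)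
      omega
  -- characterization of the start set
  have hstart : ∀ p : Fin (midLen σ), p ∈ startSet σ ↔
      ∃ t : Fin n, (p : ℕ) = gsum 1 mf ((t : ℕ)) := by
    intro p
    obtain ⟨t, r, hr, hpr⟩ := exists_block mf hmf p (by have := p.isLt; omega)
    rw [mem_startSet_iff σ p]
    constructor
    · intro hmem
      rcases Nat.eq_zero_or_pos r with hr0 | hr1
      · exact ⟨t, by omega⟩
      exfalso
      have hplt : gsum 1 mf ((t : ℕ)) + r < midLen σ := by have := p.isLt; omega
      have hplt' : gsum 1 mf ((t : ℕ)) + (r - 1) < midLen σ := by omega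
      have hω1 : (midPerm σ p : ℕ) = gsum χ mf ((χ t : ℕ)) + r := by
        rw [show p = ⟨gsum 1 mf ((t : ℕ)) + r, hplt⟩ from Fin.ext hpr]
        exact hval t r hr hplt
      have hω2 : (midPerm σ (⟨gsum 1 mf ((t : ℕ)) + (r - 1), hplt'⟩ : Fin (midLen σ)) : ℕ)
          = gsum χ mf ((χ t : ℕ)) + (r - 1) := hval t (r - 1) (by omega) hplt'
      rcases hmem with h0 | hcons
      · omega
      · refine hcons ⟨gsum 1 mf ((t : ℕ)) + (r - 1), hplt'⟩ ?_ ?_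
        · show gsum 1 mf ((t : ℕ)) + (r - 1) + 1 = (p : ℕ); omega
        · omega
    · rintro ⟨u, hpu⟩
      rcases Nat.eq_zero_or_pos (u : ℕ) with hu0 | hu1
      · left
        rw [hpu, hu0, gsum_zero]
      · right
        intro q hq
        have puw : (u : ℕ) - 1 < n := by have := u.isLt; omega
        set w : Fin n := ⟨(u : ℕ) - 1, puw⟩ with hw_def
        have hwv : (w : ℕ) = (u : ℕ) - 1 := rfl
        have hSu : gsum 1 mf ((u : ℕ)) = gsum 1 mf ((w : ℕ)) + mf w := by
          have h1 := gsum_one_succ mf ((u : ℕ) - 1) puw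
          rw [show (u : ℕ) - 1 + 1 = (u : ℕ) by omega] at h1
          exact h1
        have hmw := hmf w
        have hplt : gsum 1 mf ((u : ℕ)) + 0 < midLen σ := hblock_lt u 0 (hmf u)
        have hplt' : gsum 1 mf ((w : ℕ)) + (mf w - 1) < midLen σ :=
          hblock_lt w (mf w - 1) (by omega)
        have hω1 : (midPerm σ p : ℕ) = gsum χ mf ((χ u : ℕ)) + 0 := by
          rw [show p = ⟨gsum 1 mf ((u : ℕ)) + 0, hplt⟩ from Fin.ext (by
            show (p : ℕ) = gsum 1 mf ((u : ℕ)) + 0; omega)]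
          exact hval u 0 (hmf u) hplt
        have hω2 : (midPerm σ q : ℕ) = gsum χ mf ((χ w : ℕ)) + (mf w - 1) := by
          rw [show q = ⟨gsum 1 mf ((w : ℕ)) + (mf w - 1), hplt'⟩ from Fin.ext (by
            show (q : ℕ) = gsum 1 mf ((w : ℕ)) + (mf w - 1); omega)]
          exact hval w (mf w - 1) (by omega) hplt'
        have hterm' := hterm u w (by show (u : ℕ) = (u : ℕ) - 1 + 1; omega)
        omega
  have hSfin_lt : ∀ t : Fin n, gsum 1 mf ((t : ℕ)) < midLen σ := fun t => by
    have := hblock_lt t 0 (hmf t); omega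
  have hSinj : Function.Injective
      (fun t : Fin n => (⟨gsum 1 mf ((t : ℕ)), hSfin_lt t⟩ : Fin (midLen σ))) := by
    intro t u h
    have hv : gsum 1 mf ((t : ℕ)) = gsum 1 mf ((u : ℕ)) := congrArg Fin.val h
    exact Fin.ext (gsum_inj 1 mf hmf t.isLt u.isLt hv)
  have himg_eq : startSet σ = Finset.image
      (fun t : Fin n => (⟨gsum 1 mf ((t : ℕ)), hSfin_lt t⟩ : Fin (midLen σ)))
      Finset.univ := by
    ext p
    rw [hstart p, Finset.mem_image]
    constructor
    · rintro ⟨t, ht⟩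
      exact ⟨t, Finset.mem_univ _, Fin.ext ht.symm⟩
    · rintro ⟨t, _, ht⟩
      exact ⟨t, by rw [← ht]⟩
  have hcard : (startSet σ).card = n := by
    rw [himg_eq, Finset.card_image_of_injective _ hSinj, Finset.card_univ, Fintype.card_fin]
  -- the sorted enumeration of the start set
  have hflt : ∀ j : Fin (startSet σ).card, gsum 1 mf ((j : ℕ)) < midLen σ := by
    intro j
    have hjn : (j : ℕ) < n := by have := j.isLt; omega
    have := hSfin_lt ⟨(j : ℕ), hjn⟩
    exact this
  have hfmem : ∀ j : Fin (startSet σ).card,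
      (⟨gsum 1 mf ((j : ℕ)), hflt j⟩ : Fin (midLen σ)) ∈ startSet σ := by
    intro j
    have hjn : (j : ℕ) < n := by have := j.isLt; omega
    exact (hstart _).mpr ⟨⟨(j : ℕ), hjn⟩, rfl⟩
  have hfmono : StrictMono (fun j : Fin (startSet σ).card =>
      (⟨gsum 1 mf ((j : ℕ)), hflt j⟩ : Fin (midLen σ))) := by
    intro j j' hjj
    have hjn : (j : ℕ) < n := by have := j.isLt; omega
    rw [Fin.lt_def]
    exact gsum_lt 1 mf hmf (Fin.lt_def.mp hjj) hjn
  have hfeq : (fun j : Fin (startSet σ).card =>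
        (⟨gsum 1 mf ((j : ℕ)), hflt j⟩ : Fin (midLen σ)))
      = (startSet σ).orderEmbOfFin rfl :=
    Finset.orderEmbOfFin_unique rfl hfmem hfmono
  have hSvals : ∀ j : Fin (startSet σ).card,
      (((startSet σ).orderEmbOfFin rfl j : Fin (midLen σ)) : ℕ) = gsum 1 mf ((j : ℕ)) := by
    intro j
    rw [← hfeq]
  -- σ is not the identity
  have hσ1 : σ ≠ 1 := by
    intro heq
    exact hmove0 ⟨a, by omega⟩ rfl (Equiv.ext_iff.mp heq ⟨a, by omega⟩)
  refine ⟨ha, hc, hcard, hSvals, ?_⟩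
  rw [skel, if_neg hσ1]
  refine sigma_perm_ext hcard _ χ ?_
  intro j
  set tj : Fin n := ⟨(j : ℕ), by have := j.isLt; omega⟩ with htj_def
  have hcastj : Fin.cast hcard j = tj := Fin.ext rfl
  rw [hcastj]
  -- identify the sorted enumeration of the image set
  have hglt : ∀ i : Fin (startSet σ).card, gsum χ mf ((i : ℕ)) < midLen σ := by
    intro i
    have hin : (i : ℕ) < n := by have := i.isLt; omega
    set wi : Fin n := χ.symm ⟨(i : ℕ), hin⟩ with hwi_def
    have hv : (χ wi : ℕ) = (i : ℕ) := by rw [hwi_def, Equiv.apply_symm_apply]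
    have h1 := gsum_chi_lt_total χ mf wi
    have h2 := hmf wi
    rw [hv] at h1
    omega
  have hgmem : ∀ i : Fin (startSet σ).card,
      (⟨gsum χ mf ((i : ℕ)), hglt i⟩ : Fin (midLen σ))
        ∈ (startSet σ).image (fun s => midPerm σ s) := by
    intro i
    have hin : (i : ℕ) < n := by have := i.isLt; omega
    set wi : Fin n := χ.symm ⟨(i : ℕ), hin⟩ with hwi_def
    have hv : (χ wi : ℕ) = (i : ℕ) := by rw [hwi_def, Equiv.apply_symm_apply]
    have hplt : gsum 1 mf ((wi : ℕ)) + 0 < midLen σ := hblock_lt wi 0 (hmf wi)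
    refine Finset.mem_image.mpr ⟨⟨gsum 1 mf ((wi : ℕ)) + 0, hplt⟩,
      (hstart _).mpr ⟨wi, by show gsum 1 mf ((wi : ℕ)) + 0 = gsum 1 mf ((wi : ℕ)); omega⟩, ?_⟩
    refine Fin.ext ?_
    rw [hval wi 0 (hmf wi) hplt]
    show gsum χ mf ((χ wi : ℕ)) + 0 = gsum χ mf ((i : ℕ))
    rw [hv]
    omega
  have hgmono : StrictMono (fun i : Fin (startSet σ).card =>
      (⟨gsum χ mf ((i : ℕ)), hglt i⟩ : Fin (midLen σ))) := by
    intro i i' hii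
    have hin : (i : ℕ) < n := by have := i.isLt; omega
    rw [Fin.lt_def]
    exact gsum_lt χ mf hmf (Fin.lt_def.mp hii) hin
  have hgeq : (fun i : Fin (startSet σ).card =>
        (⟨gsum χ mf ((i : ℕ)), hglt i⟩ : Fin (midLen σ)))
      = ((startSet σ).image (fun s => midPerm σ s)).orderEmbOfFin
          (Finset.card_image_of_injective _ (midPerm σ).injective) :=
    Finset.orderEmbOfFin_unique _ hgmem hgmono
  -- compute the skeleton at j
  simp only [Equiv.trans_apply]
  set isoS := (startSet σ).orderIsoOfFin rfl with hisoS
  set isoI := ((startSet σ).image (fun s => midPerm σ s)).orderIsoOfFin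
    (Finset.card_image_of_injective _ (midPerm σ).injective) with hisoI
  set i0 : Fin (startSet σ).card := ⟨(χ tj : ℕ), by rw [hcard]; exact (χ tj).isLt⟩ with hi0
  have hSj : (isoS j : Fin (midLen σ)) = ⟨gsum 1 mf ((j : ℕ)), hflt j⟩ := by
    have h1 : (isoS j : Fin (midLen σ)) = (startSet σ).orderEmbOfFin rfl j :=
      Finset.coe_orderIsoOfFin_apply _ _ _
    rw [h1, ← hfeq]
  have hmidval : (midPerm σ (isoS j : Fin (midLen σ)) : ℕ) = gsum χ mf ((χ tj : ℕ)) := by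
    rw [hSj]
    have hplt : gsum 1 mf ((tj : ℕ)) + 0 < midLen σ := hblock_lt tj 0 (hmf tj)
    rw [show (⟨gsum 1 mf ((j : ℕ)), hflt j⟩ : Fin (midLen σ))
      = ⟨gsum 1 mf ((tj : ℕ)) + 0, hplt⟩ from Fin.ext (by
        show gsum 1 mf ((tj : ℕ)) = gsum 1 mf ((tj : ℕ)) + 0
        omega)]
    rw [hval tj 0 (hmf tj) hplt]
    omega
  have hIi0 : (isoI i0 : Fin (midLen σ)) = ⟨gsum χ mf ((i0 : ℕ)), hglt i0⟩ := by
    have h1 : (isoI i0 : Fin (midLen σ)) = _ := Finset.coe_orderIsoOfFin_apply _ _ i0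
    rw [h1, ← hgeq]
  have hkey : (Equiv.ofBijective
        (fun x : {y // y ∈ startSet σ} =>
          (⟨midPerm σ x.1, Finset.mem_image_of_mem _ x.2⟩ :
            {y // y ∈ (startSet σ).image (fun s => midPerm σ s)}))
        ⟨fun x y hxy => Subtype.ext ((midPerm σ).injective (congrArg Subtype.val hxy)),
         fun y => by
           obtain ⟨x, hx, hxy⟩ := Finset.mem_image.mp y.2
           exact ⟨⟨x, hx⟩, Subtype.ext hxy⟩⟩) (isoS.toEquiv j) = isoI.toEquiv i0 := by
    apply Subtype.ext
    apply Fin.ext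
    show (midPerm σ (isoS j : Fin (midLen σ)) : ℕ) = ((isoI i0 : Fin (midLen σ)) : ℕ)
    rw [hmidval, hIi0]
  rw [hkey, Equiv.symm_apply_apply]

lemma fwd_main {n m : ℕ} (hn : 2 ≤ n) (χ : Equiv.Perm (Fin n)) (σ : Equiv.Perm (Fin m))
    (hskel : skel σ = ⟨n, χ⟩) : ∃ x : ℕ × ℕ × (Fin n → ℕ), IsBlockExpansion χ σ x := by
  have hσ1 : σ ≠ 1 := by
    intro h
    rw [h, skel, if_pos rfl] at hskel
    have h1 := congrArg Sigma.fst hskel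
    simp only at h1
    omega
  rw [skel, if_neg hσ1] at hskel
  have hcard : (startSet σ).card = n := congrArg Sigma.fst hskel
  subst hcard
  have hπ : ((startSet σ).orderIsoOfFin rfl).toEquiv.trans
      ((Equiv.ofBijective
          (fun x : {y // y ∈ startSet σ} =>
            (⟨midPerm σ x.1, Finset.mem_image_of_mem _ x.2⟩ :
              {y // y ∈ (startSet σ).image (fun s => midPerm σ s)}))
          ⟨fun x y hxy => Subtype.ext ((midPerm σ).injective (congrArg Subtype.val hxy)),
           fun y => by
             obtain ⟨x, hx, hxy⟩ := Finset.mem_image.mp y.2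
             exact ⟨⟨x, hx⟩, Subtype.ext hxy⟩⟩).trans
        (((startSet σ).image (fun s => midPerm σ s)).orderIsoOfFin
          (Finset.card_image_of_injective _ (midPerm σ).injective)).toEquiv.symm) = χ := by
    exact eq_of_heq (Sigma.ext_iff.mp hskel).2
  have hL1 : 0 < midLen σ := midLen_pos σ hσ1
  set S : Fin (startSet σ).card → Fin (midLen σ) := fun t => (startSet σ).orderEmbOfFin rfl t with hS_def
  have hmemS : ∀ p : Fin (midLen σ), p ∈ startSet σ ↔ ∃ t : Fin (startSet σ).card, S t = p := by
    intro p
    constructor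
    · intro hp
      refine ⟨((startSet σ).orderIsoOfFin rfl).symm ⟨p, hp⟩, ?_⟩
      show ((startSet σ).orderEmbOfFin rfl) _ = p
      rw [← Finset.coe_orderIsoOfFin_apply, OrderIso.apply_symm_apply]
    · rintro ⟨t, rfl⟩
      exact Finset.orderEmbOfFin_mem _ _ _
  have hSmono : StrictMono S := ((startSet σ).orderEmbOfFin rfl).strictMono
  have hS0 : (S ⟨0, by omega⟩ : ℕ) = 0 := by
    have h0mem : (⟨0, hL1⟩ : Fin (midLen σ)) ∈ startSet σ :=
      (mem_startSet_iff σ _).mpr (Or.inl rfl)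
    obtain ⟨t, ht⟩ := (hmemS _).mp h0mem
    have h1 : S ⟨0, by omega⟩ ≤ S t := hSmono.monotone (by
      show (0 : ℕ) ≤ (t : ℕ); omega)
    have h2 : (S t : ℕ) = 0 := by rw [ht]
    omega
  set sext : ℕ → ℕ := fun k => if h : k < (startSet σ).card then (S ⟨k, h⟩ : ℕ) else midLen σ with hsext_def
  set mf : Fin (startSet σ).card → ℕ := fun t => sext ((t : ℕ) + 1) - sext (t : ℕ) with hmf_def
  have hsext_lt : ∀ k, k < (startSet σ).card → sext k < sext (k + 1) := by
    intro k hk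
    rcases Nat.lt_or_ge (k + 1) (startSet σ).card with h1 | h1
    · show (if h : k < (startSet σ).card then ((S ⟨k, h⟩ : Fin (midLen σ)) : ℕ) else midLen σ)
        < (if h : k + 1 < (startSet σ).card then ((S ⟨k + 1, h⟩ : Fin (midLen σ)) : ℕ) else midLen σ)
      rw [dif_pos hk, dif_pos h1]
      exact Fin.lt_def.mp (hSmono (show (⟨k, hk⟩ : Fin (startSet σ).card) < ⟨k + 1, h1⟩ from
        Fin.mk_lt_mk.mpr (by omega)))
    · show (if h : k < (startSet σ).card then ((S ⟨k, h⟩ : Fin (midLen σ)) : ℕ) else midLen σ)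
        < (if h : k + 1 < (startSet σ).card then ((S ⟨k + 1, h⟩ : Fin (midLen σ)) : ℕ) else midLen σ)
      rw [dif_pos hk, dif_neg (by omega)]
      exact (S ⟨k, hk⟩).isLt
  have hmf1 : ∀ t, 1 ≤ mf t := by
    intro t
    have := hsext_lt (t : ℕ) t.isLt
    show 1 ≤ sext ((t : ℕ) + 1) - sext (t : ℕ)
    omega
  have hsext0 : sext 0 = 0 := by
    show (if h : 0 < (startSet σ).card then ((S ⟨0, h⟩ : Fin (midLen σ)) : ℕ) else midLen σ) = 0
    rw [dif_pos (by omega : 0 < (startSet σ).card)]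
    exact hS0
  have hgsext : ∀ k, k ≤ (startSet σ).card → gsum 1 mf k = sext k := by
    intro k
    induction k with
    | zero => intro _; rw [gsum_zero, hsext0]
    | succ k ih =>
      intro hk
      have hkN : k < (startSet σ).card := by omega
      have h1 : gsum 1 mf (k + 1) = gsum 1 mf k + mf ⟨k, hkN⟩ := gsum_one_succ mf k hkN
      have h2 := ih (by omega)
      have h3 : mf ⟨k, hkN⟩ = sext (k + 1) - sext k := rfl
      have h4 := hsext_lt k hkN
      omega
  have htotal : ∑ t, mf t = midLen σ := by
    have h1 : gsum 1 mf (startSet σ).card = ∑ t, mf t := gsum_top 1 mf (startSet σ).card (le_refl (startSet σ).card)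
    have h2 := hgsext (startSet σ).card (le_refl (startSet σ).card)
    have h3 : sext (startSet σ).card = midLen σ := by
      show (if h : (startSet σ).card < (startSet σ).card then ((S ⟨(startSet σ).card, h⟩ : Fin (midLen σ)) : ℕ) else midLen σ) = midLen σ
      rw [dif_neg (by omega)]
    omega
  have hsextS : ∀ t : Fin (startSet σ).card, (S t : ℕ) = sext (t : ℕ) := by
    intro t
    show (S t : ℕ) = if h : (t : ℕ) < (startSet σ).card then ((S ⟨(t : ℕ), h⟩ : Fin (midLen σ)) : ℕ) else midLen σ
    rw [dif_pos t.isLt]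
  have hsext_le : ∀ k l, k ≤ l → l ≤ (startSet σ).card → sext k ≤ sext l := by
    intro k l hkl hl
    rw [← hgsext k (by omega), ← hgsext l hl]
    exact gsum_le 1 mf hkl
  have hsextN : sext (startSet σ).card = midLen σ := by
    show (if h : (startSet σ).card < (startSet σ).card then ((S ⟨(startSet σ).card, h⟩ : Fin (midLen σ)) : ℕ) else midLen σ) = midLen σ
    rw [dif_neg (by omega)]
  have hsub : ∀ (t : Fin (startSet σ).card) (r : ℕ), r < mf t → sext ((t : ℕ)) + r < sext ((t : ℕ) + 1) := by
    intro t r hr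
    have h1 : mf t = sext ((t : ℕ) + 1) - sext ((t : ℕ)) := rfl
    have h2 := hsext_lt (t : ℕ) t.isLt
    omega
  have hsublt : ∀ (t : Fin (startSet σ).card) (r : ℕ), r < mf t → sext ((t : ℕ)) + r < midLen σ := by
    intro t r hr
    have h1 := hsub t r hr
    have h2 : sext ((t : ℕ) + 1) ≤ sext (startSet σ).card := hsext_le _ _ (by have := t.isLt; omega) (le_refl (startSet σ).card)
    omega
  have hstep : ∀ p : Fin (midLen σ), p ∉ startSet σ → ∀ q : Fin (midLen σ),
      (q : ℕ) + 1 = (p : ℕ) → (midPerm σ p : ℕ) = (midPerm σ q : ℕ) + 1 := by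
    intro p hp q hq
    rw [mem_startSet_iff] at hp
    push_neg at hp
    obtain ⟨hp1, q', hq', heq⟩ := hp
    rw [show q = q' from Fin.ext (by omega)]
    exact heq
  have hblockval : ∀ (t : Fin (startSet σ).card) (r : ℕ), sext ((t : ℕ)) + r < sext ((t : ℕ) + 1) →
      ∀ q : Fin (midLen σ), (q : ℕ) = sext ((t : ℕ)) + r →
      (midPerm σ q : ℕ) = (midPerm σ (S t) : ℕ) + r := by
    intro t r
    induction r with
    | zero =>
      intro _ q hq
      rw [show q = S t from Fin.ext (by have := hsextS t; omega)]
      omega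
    | succ r ih =>
      intro hr q hq
      have hr' : sext ((t : ℕ)) + r < sext ((t : ℕ) + 1) := by omega
      have hqlt : sext ((t : ℕ)) + r < midLen σ := by
        have h2 : sext ((t : ℕ) + 1) ≤ sext (startSet σ).card := hsext_le _ _ (by have := t.isLt; omega) (le_refl (startSet σ).card)
        omega
      have hq'ω := ih hr' ⟨sext ((t : ℕ)) + r, hqlt⟩ rfl
      have hqstart : q ∉ startSet σ := by
        intro hmem
        obtain ⟨u, hu⟩ := (hmemS q).mp hmem
        have huv : (S u : ℕ) = (q : ℕ) := by rw [hu]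
        rw [hsextS u] at huv
        rcases Nat.lt_or_ge ((u : ℕ)) ((t : ℕ) + 1) with h1 | h1
        · have : sext ((u : ℕ)) ≤ sext ((t : ℕ)) := hsext_le _ _ (by omega) (by have := t.isLt; omega)
          omega
        · have : sext ((t : ℕ) + 1) ≤ sext ((u : ℕ)) := hsext_le _ _ h1 (by have := u.isLt; omega)
          omega
      have hs := hstep q hqstart ⟨sext ((t : ℕ)) + r, hqlt⟩ (by
        show sext ((t : ℕ)) + r + 1 = (q : ℕ); omega)
      omega
  have hTub : ∀ t : Fin (startSet σ).card, (midPerm σ (S t) : ℕ) + mf t ≤ midLen σ := by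
    intro t
    have h1 := hmf1 t
    have hqlt := hsublt t (mf t - 1) (by omega)
    have hω := hblockval t (mf t - 1) (hsub t _ (by omega)) ⟨sext ((t : ℕ)) + (mf t - 1), hqlt⟩ rfl
    have := (midPerm σ ⟨sext ((t : ℕ)) + (mf t - 1), hqlt⟩).isLt
    omega
  have hcover : ∀ v : ℕ, v < midLen σ → ∃ t : Fin (startSet σ).card, ∃ r, r < mf t ∧
      v = (midPerm σ (S t) : ℕ) + r := by
    intro v hv
    set p := (midPerm σ).symm ⟨v, hv⟩ with hp_def
    obtain ⟨t, r, hr, hpr⟩ := exists_block mf hmf1 (p : ℕ) (by rw [htotal]; exact p.isLt)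
    rw [hgsext ((t : ℕ)) (by have := t.isLt; omega)] at hpr
    have hω := hblockval t r (hsub t r hr) p hpr
    have hval' : (midPerm σ p : ℕ) = v := by
      rw [hp_def, Equiv.apply_symm_apply]
    exact ⟨t, r, hr, by omega⟩
  have hdisj : ∀ t u : Fin (startSet σ).card, ∀ r r' : ℕ, r < mf t → r' < mf u →
      (midPerm σ (S t) : ℕ) + r = (midPerm σ (S u) : ℕ) + r' → t = u := by
    intro t u r r' hr hr' heq
    have hq1 := hsublt t r hr
    have hq2 := hsublt u r' hr'
    have hω1 := hblockval t r (hsub t r hr) ⟨sext ((t : ℕ)) + r, hq1⟩ rfl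
    have hω2 := hblockval u r' (hsub u r' hr') ⟨sext ((u : ℕ)) + r', hq2⟩ rfl
    have heqq : (⟨sext ((t : ℕ)) + r, hq1⟩ : Fin (midLen σ)) = ⟨sext ((u : ℕ)) + r', hq2⟩ :=
      (midPerm σ).injective (Fin.ext (by omega))
    have hvals : sext ((t : ℕ)) + r = sext ((u : ℕ)) + r' := congrArg Fin.val heqq
    rcases Nat.lt_trichotomy ((t : ℕ)) ((u : ℕ)) with h1 | h1 | h1
    · exfalso
      have h2 := hsub t r hr
      have h3 : sext ((t : ℕ) + 1) ≤ sext ((u : ℕ)) := hsext_le _ _ (by omega) (by have := u.isLt; omega)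
      omega
    · exact Fin.ext h1
    · exfalso
      have h2 := hsub u r' hr'
      have h3 : sext ((u : ℕ) + 1) ≤ sext ((t : ℕ)) := hsext_le _ _ (by omega) (by have := t.isLt; omega)
      omega
  have hC4 : ∀ t u : Fin (startSet σ).card, ((χ t : ℕ) < (χ u : ℕ) ↔
      (midPerm σ (S t) : ℕ) < (midPerm σ (S u) : ℕ)) := by
    intro t u
    have h1 : ∀ w : Fin (startSet σ).card, χ w =
        (((startSet σ).image (fun s => midPerm σ s)).orderIsoOfFin
          (Finset.card_image_of_injective _ (midPerm σ).injective)).symm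
        ⟨midPerm σ (((startSet σ).orderIsoOfFin rfl w : {y // y ∈ startSet σ}) : Fin (midLen σ)),
          Finset.mem_image_of_mem _ ((startSet σ).orderIsoOfFin rfl w).2⟩ := by
      intro w
      rw [← hπ]
      rfl
    rw [← Fin.lt_def, h1 t, h1 u, OrderIso.lt_iff_lt, Subtype.mk_lt_mk, Fin.lt_def]
    have h2 : ∀ w : Fin (startSet σ).card,
        (((startSet σ).orderIsoOfFin rfl w : {y // y ∈ startSet σ}) : Fin (midLen σ)) = S w :=
      fun w => Finset.coe_orderIsoOfFin_apply _ _ w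
    rw [h2 t, h2 u]
  have hTinj : ∀ w u : Fin (startSet σ).card,
      (midPerm σ (S w) : ℕ) = (midPerm σ (S u) : ℕ) → w = u := by
    intro w u h
    exact hSmono.injective ((midPerm σ).injective (Fin.ext h))
  have hTval : ∀ i : ℕ, ∀ hi : i < (startSet σ).card,
      (midPerm σ (S (χ.symm ⟨i, hi⟩)) : ℕ) = gsum χ mf i := by
    intro i
    induction i with
    | zero =>
      intro hi
      rw [gsum_zero]
      obtain ⟨t, r, hr, h0⟩ := hcover 0 hL1
      have hTp0 : (midPerm σ (S t) : ℕ) = 0 := by omega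
      have hteq : t = χ.symm ⟨0, hi⟩ := by
        have h2 : ¬ ((χ (χ.symm ⟨0, hi⟩) : ℕ) < (χ t : ℕ)) := by
          intro hu
          have := (hC4 _ t).mp hu
          omega
        have h3 : (χ (χ.symm ⟨0, hi⟩) : ℕ) = 0 := by rw [Equiv.apply_symm_apply]
        have h5 : χ t = ⟨0, hi⟩ := Fin.ext (show (χ t : ℕ) = 0 by omega)
        rw [← h5, Equiv.symm_apply_apply]
      rw [← hteq, hTp0]
    | succ i ih =>
      intro hi1
      have hi : i < (startSet σ).card := by omega
      have IH := ih hi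
      have hχcur : (χ (χ.symm ⟨i, hi⟩) : ℕ) = i := by rw [Equiv.apply_symm_apply]
      have hχv : (χ (χ.symm ⟨i + 1, hi1⟩) : ℕ) = i + 1 := by rw [Equiv.apply_symm_apply]
      have hTcv : (midPerm σ (S (χ.symm ⟨i, hi⟩)) : ℕ)
          < (midPerm σ (S (χ.symm ⟨i + 1, hi1⟩)) : ℕ) := (hC4 _ _).mp (by omega)
      have hTub_cur := hTub (χ.symm ⟨i, hi⟩)
      have hmf_cur := hmf1 (χ.symm ⟨i, hi⟩)
      have hTvq : (midPerm σ (S (χ.symm ⟨i, hi⟩)) : ℕ) + mf (χ.symm ⟨i, hi⟩)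
          ≤ (midPerm σ (S (χ.symm ⟨i + 1, hi1⟩)) : ℕ) := by
        by_contra hcon
        push_neg at hcon
        have hd := hdisj (χ.symm ⟨i, hi⟩) (χ.symm ⟨i + 1, hi1⟩)
          ((midPerm σ (S (χ.symm ⟨i + 1, hi1⟩)) : ℕ)
            - (midPerm σ (S (χ.symm ⟨i, hi⟩)) : ℕ)) 0
          (by omega) (hmf1 _) (by omega)
        have : (χ (χ.symm ⟨i, hi⟩) : ℕ) = (χ (χ.symm ⟨i + 1, hi1⟩) : ℕ) := by rw [hd]
        omega
      have hTvlt : (midPerm σ (S (χ.symm ⟨i + 1, hi1⟩)) : ℕ) < midLen σ := by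
        have := hTub (χ.symm ⟨i + 1, hi1⟩)
        have := hmf1 (χ.symm ⟨i + 1, hi1⟩)
        omega
      obtain ⟨w, r, hrw, hq⟩ := hcover
        ((midPerm σ (S (χ.symm ⟨i, hi⟩)) : ℕ) + mf (χ.symm ⟨i, hi⟩)) (by omega)
      have hwne : w ≠ χ.symm ⟨i, hi⟩ := by
        intro h
        rw [h] at hq hrw
        omega
      have hr0 : r = 0 := by
        by_contra hr1
        rcases Nat.lt_trichotomy ((midPerm σ (S w) : ℕ))
          ((midPerm σ (S (χ.symm ⟨i, hi⟩)) : ℕ)) with h1 | h1 | h1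
        · have := hdisj w (χ.symm ⟨i, hi⟩)
            ((midPerm σ (S (χ.symm ⟨i, hi⟩)) : ℕ) - (midPerm σ (S w) : ℕ)) 0
            (by omega) hmf_cur (by omega)
          exact hwne this
        · exact hwne (hTinj w _ h1)
        · have := hdisj (χ.symm ⟨i, hi⟩) w
            ((midPerm σ (S w) : ℕ) - (midPerm σ (S (χ.symm ⟨i, hi⟩)) : ℕ)) 0
            (by omega) (hmf1 w) (by omega)
          exact hwne this.symm
      have hTw : (midPerm σ (S w) : ℕ)
          = (midPerm σ (S (χ.symm ⟨i, hi⟩)) : ℕ) + mf (χ.symm ⟨i, hi⟩) := by omega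
      have h2 : (χ (χ.symm ⟨i, hi⟩) : ℕ) < (χ w : ℕ) := (hC4 _ w).mpr (by omega)
      have h3 : ¬ ((χ (χ.symm ⟨i + 1, hi1⟩) : ℕ) < (χ w : ℕ)) := by
        intro h
        have := (hC4 _ w).mp h
        omega
      have h5 : w = χ.symm ⟨i + 1, hi1⟩ := by
        have h4 : χ w = ⟨i + 1, hi1⟩ := Fin.ext (show (χ w : ℕ) = i + 1 by omega)
        rw [← h4, Equiv.symm_apply_apply]
      have h6 : gsum χ mf (i + 1) = gsum χ mf i + mf (χ.symm ⟨i, hi⟩) := gsum_succ χ mf i hi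
      rw [← h5, hTw, h6, ← IH]
  have htp : ∀ t : Fin (startSet σ).card,
      (midPerm σ (S t) : ℕ) = gsum χ mf ((χ t : ℕ)) := by
    intro t
    have h := hTval ((χ t : ℕ)) (χ t).isLt
    rw [show χ.symm ⟨((χ t : ℕ)), (χ t).isLt⟩ = t by
      rw [show (⟨((χ t : ℕ)), (χ t).isLt⟩ : Fin (startSet σ).card) = χ t from Fin.ext rfl,
        Equiv.symm_apply_apply]] at h
    exact h
  -- assemble the block expansion
  have hmid : midLen σ = m - aOf σ - cOf σ := rfl
  have haOfle := aOf_le σ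
  have hcOfle := cOf_le σ
  refine ⟨(aOf σ, cOf σ, mf), hmf1, by show aOf σ + (∑ t, mf t) + cOf σ = m; omega, ?_⟩
  intro j
  refine ⟨fun hj => fix_low σ j hj, fun hj => fix_high σ j (by
    have h1 := htotal
    have h2 : aOf σ + (∑ t, mf t) ≤ (j : ℕ) := hj
    omega), ?_⟩
  intro t r hr hj
  rw [sum_filter_chi_eq χ mf t]
  rw [sum_filter_lt_eq mf t, hgsext ((t : ℕ)) (by have := t.isLt; omega)] at hj
  have hplt : sext ((t : ℕ)) + r < midLen σ := hsublt t r hr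
  have hω := hblockval t r (hsub t r hr) ⟨sext ((t : ℕ)) + r, hplt⟩ rfl
  have hs := sigma_mid_val σ hplt
  rw [show (⟨aOf σ + (sext ((t : ℕ)) + r), aOf_add_lt σ hplt⟩ : Fin m) = j from
    Fin.ext (by show aOf σ + (sext ((t : ℕ)) + r) = (j : ℕ); omega)] at hs
  have := htp t
  omega

/-- Let `χ ∈ Σ_n` be primitive, `n ≥ 2`, and `m ≥ 1`.  Then `σ ∈ Σ_m` has skeleton
`κ(σ) = χ` if and only if `σ = id_a × χ⟨m₁,…,m_n⟩ × id_c` for some `a, c ≥ 0` and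
`m₁,…,m_n ≥ 1` with `a + c + m₁ + ⋯ + m_n = m`; moreover such `(a, c, m₁,…,m_n)` are
uniquely determined by `σ`. -/
theorem skel_eq_iff_block_expansion (n : ℕ) (hn : 2 ≤ n) (χ : Equiv.Perm (Fin n))
    (hχ : grade χ = 0) (m : ℕ) (hm : 1 ≤ m) (σ : Equiv.Perm (Fin m)) :
    (skel σ = ⟨n, χ⟩ ↔ ∃ x : ℕ × ℕ × (Fin n → ℕ), IsBlockExpansion χ σ x) ∧
    (∀ x y : ℕ × ℕ × (Fin n → ℕ),
      IsBlockExpansion χ σ x → IsBlockExpansion χ σ y → x = y) := by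
  constructor
  · constructor
    · exact fun h => fwd_main hn χ σ h
    · rintro ⟨x, hx⟩
      obtain ⟨_, _, _, _, hskel⟩ := rev_main hn χ hχ σ x hx
      exact hskel
  · intro x y hx hy
    obtain ⟨hax, hcx, hcardx, hSx, -⟩ := rev_main hn χ hχ σ x hx
    obtain ⟨hay, hcy, hcardy, hSy, -⟩ := rev_main hn χ hχ σ y hy
    have htx : x.1 + (∑ t, x.2.2 t) + x.2.1 = m := hx.2.1
    have hty : y.1 + (∑ t, y.2.2 t) + y.2.1 = m := hy.2.1
    have h1 : x.1 = y.1 := by omega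
    have h2 : x.2.1 = y.2.1 := by omega
    have htot : (∑ t, x.2.2 t) = (∑ t, y.2.2 t) := by omega
    have hg : ∀ k, k < n → gsum 1 x.2.2 k = gsum 1 y.2.2 k := by
      intro k hk
      have hk' : k < (startSet σ).card := by omega
      have e1 : (((startSet σ).orderEmbOfFin rfl ⟨k, hk'⟩ : Fin (midLen σ)) : ℕ)
          = gsum 1 x.2.2 k := hSx ⟨k, hk'⟩
      have e2 : (((startSet σ).orderEmbOfFin rfl ⟨k, hk'⟩ : Fin (midLen σ)) : ℕ)
          = gsum 1 y.2.2 k := hSy ⟨k, hk'⟩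
      omega
    have hmf : ∀ t : Fin n, x.2.2 t = y.2.2 t := by
      intro t
      have h3 : gsum 1 x.2.2 ((t : ℕ)) = gsum 1 y.2.2 ((t : ℕ)) := hg _ t.isLt
      have h4x : gsum 1 x.2.2 ((t : ℕ) + 1) = gsum 1 x.2.2 ((t : ℕ)) + x.2.2 t := by
        have h := gsum_one_succ x.2.2 ((t : ℕ)) t.isLt
        rw [show (⟨(t : ℕ), t.isLt⟩ : Fin n) = t from Fin.ext rfl] at h
        exact h
      have h4y : gsum 1 y.2.2 ((t : ℕ) + 1) = gsum 1 y.2.2 ((t : ℕ)) + y.2.2 t := by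
        have h := gsum_one_succ y.2.2 ((t : ℕ)) t.isLt
        rw [show (⟨(t : ℕ), t.isLt⟩ : Fin n) = t from Fin.ext rfl] at h
        exact h
      rcases Nat.lt_or_ge ((t : ℕ) + 1) n with h5 | h5
      · have h6 := hg _ h5
        omega
      · have h6x : gsum 1 x.2.2 ((t : ℕ) + 1) = ∑ t', x.2.2 t' := gsum_top _ _ _ (by omega)
        have h6y : gsum 1 y.2.2 ((t : ℕ) + 1) = ∑ t', y.2.2 t' := gsum_top _ _ _ (by omega)
        omega
    have h7 : x.2 = y.2 := Prod.ext_iff.mpr ⟨h2, funext hmf⟩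
    exact Prod.ext_iff.mpr ⟨h1, h7⟩

end MarklOps
end
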